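/- Assume that X does not creep downward (i.e., P_x(X_{τ−} = 0, τ < ∞) = 0 for all x > 0) and that 0 < π((−∞,0)) < ∞. Then the resurrected process has infinite lifetime: P_x(ζ = ∞) = 1 for every x > 0. -/

import Mathlib

noncomputable section
open MeasureTheory ProbabilityTheory Set Filter
open scoped ENNReal NNReal Classical

/-- The first passage time of a path into `(-∞,0]`, as an extended nonnegative real. -/
def tauP (f : ℝ → ℝ) : ℝ≥0∞ :=
  if ∃ t : ℝ, 0 ≤ t ∧ f t ≤ 0 then ENNReal.ofReal (sInf {t : ℝ | 0 ≤ t ∧ f t ≤ 0}) else ∞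

/-- The left limit `f(T-)` of a path at a time `T`, with the convention `f(0-) = f 0`. -/
def preVal (f : ℝ → ℝ) (T : ℝ≥0∞) : ℝ :=
  if T = 0 then f 0 else Function.leftLim f T.toReal

/-- The sequence of paths `X^{(n+1)}`, `n ≥ 0`, obtained from the path `f = X^{(1)}` by
successively removing the first jump through `0`. -/
def resSeq (f : ℝ → ℝ) : ℕ → ℝ → ℝ
  | 0 => f
  | n + 1 =>
      let g := resSeq f n
      if tauP g = ∞ then g
      else fun t =>
        if ENNReal.ofReal t < tauP g then g t
        else g t - (g (tauP g).toReal - preVal g (tauP g))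

/-- `tauSeq f n` is the resurrection time `τ_{n+1}`, the first passage time of `X^{(n+1)}`
into `(-∞,0]`. -/
def tauSeq (f : ℝ → ℝ) (n : ℕ) : ℝ≥0∞ := tauP (resSeq f n)

/-- The resurrection times `τ_n`, `n ≥ 0`, with `τ_0 = 0`. -/
def tauN (f : ℝ → ℝ) : ℕ → ℝ≥0∞
  | 0 => 0
  | n + 1 => tauSeq f n

/-- The resurrected path `Z` built from the path `f`: `Z_t = lim_n X^{(n)}_t 1_{t < τ_n}`. -/
def resProc (f : ℝ → ℝ) (t : ℝ) : ℝ :=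
  if h : ∃ n, ENNReal.ofReal t < tauSeq f n then resSeq f (Nat.find h) t else 0

/-- The absorption time `ζ = lim_n τ_n` of the resurrected path. -/
def zetaP (f : ℝ → ℝ) : ℝ≥0∞ := ⨆ n, tauSeq f n

/-- The exponential function on `ℝ≥0∞`. -/
def eexp (a : ℝ≥0∞) : ℝ≥0∞ := ∑' n : ℕ, a ^ n / (Nat.factorial n : ℝ≥0∞)

/-- The number of jumps of a path during the time interval `(0,1]` whose sizes lie in `A`,
as an element of `ℝ≥0∞`. -/
def jumpCount (f : ℝ → ℝ) (A : Set ℝ) : ℝ≥0∞ :=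
  ∑' _ : {t : ℝ // t ∈ Set.Ioc (0:ℝ) 1 ∧ f t - Function.leftLim f t ∈ A}, (1 : ℝ≥0∞)

/-- `X` is a Lévy process under `P`: it starts from `0`, has càdlàg paths and stationary
independent increments. -/
structure IsLevy {Ω : Type*} [MeasurableSpace Ω] (P : Measure Ω) (X : ℝ → Ω → ℝ) : Prop where
  measurable : ∀ t, Measurable (X t)
  init : ∀ ω, X 0 ω = 0
  cadlag_right : ∀ ω, ∀ t ≥ (0:ℝ), ContinuousWithinAt (fun s => X s ω) (Set.Ici t) t
  cadlag_left : ∀ ω, ∀ t > (0:ℝ),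
    Tendsto (fun s => X s ω) (nhdsWithin t (Set.Iio t)) (nhds (Function.leftLim (fun s => X s ω) t))
  indep_incr : ∀ (n : ℕ) (t : ℕ → ℝ), Monotone t → 0 ≤ t 0 →
    iIndepFun (m := fun _ : Fin n => Real.measurableSpace)
      (fun i ω => X (t (i + 1 : ℕ)) ω - X (t i) ω) P
  stat_incr : ∀ s t : ℝ, 0 ≤ s → 0 ≤ t →
    Measure.map (fun ω => X (s + t) ω - X s ω) P = Measure.map (X t) P

/-- `π` is the Lévy measure of the process `X` under `P` : on sets bounded away from `0`, it
gives the expected number of jumps of `X` during `(0,1]` with sizes in the set. -/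
def IsLevyMeasure {Ω : Type*} [MeasurableSpace Ω] (P : Measure Ω) (X : ℝ → Ω → ℝ)
    (π : Measure ℝ) : Prop :=
  π {0} = 0 ∧ ∀ A : Set ℝ, MeasurableSet A → (∃ ε > 0, A ⊆ {y : ℝ | ε ≤ |y|}) →
    π A = ∫⁻ ω, jumpCount (fun t => X t ω) A ∂P

/-- The negative tail `π̄⁻(y) = π((-∞,y])` of a Lévy measure. -/
def negTail (π : Measure ℝ) (y : ℝ) : ℝ≥0∞ := π (Set.Iic y)

/-- The path of the process started from `x`, i.e. the process `X` under `P_x`. -/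
def pathFrom {Ω : Type*} (X : ℝ → Ω → ℝ) (x : ℝ) (ω : Ω) : ℝ → ℝ := fun t => x + X t ω


/-! ### Part 0 : cadlag basics -/

/-- cadlag on `[0,∞)` predicate -/
def Cadlag (f : ℝ → ℝ) : Prop :=
  (∀ t ≥ (0:ℝ), ContinuousWithinAt f (Set.Ici t) t) ∧
  (∀ t > (0:ℝ), Tendsto f (nhdsWithin t (Set.Iio t)) (nhds (Function.leftLim f t)))

lemma leftLim_of_tendsto {f : ℝ → ℝ} {t y : ℝ}
    (h : Tendsto f (nhdsWithin t (Set.Iio t)) (nhds y)) : Function.leftLim f t = y :=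
  leftLim_eq_of_tendsto h

lemma cadlag_sub_const {f : ℝ → ℝ} (hf : Cadlag f) (c : ℝ) : Cadlag (fun t => f t - c) := by
  constructor
  · intro t ht
    exact ((hf.1 t ht).sub continuousWithinAt_const)
  · intro t ht
    have h := (hf.2 t ht).sub_const c
    have : Function.leftLim (fun s => f s - c) t = Function.leftLim f t - c :=
      leftLim_of_tendsto h
    rw [this]; exact h

lemma cadlag_const_add {f : ℝ → ℝ} (hf : Cadlag f) (c : ℝ) : Cadlag (fun t => c + f t) := by
  constructor
  · intro t ht
    exact (continuousWithinAt_const.add (hf.1 t ht))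
  · intro t ht
    have h := (hf.2 t ht).const_add c
    have : Function.leftLim (fun s => c + f s) t = c + Function.leftLim f t :=
      leftLim_of_tendsto h
    rw [this]; exact h

lemma leftLim_const_add {f : ℝ → ℝ} {t : ℝ} (ht : 0 < t) (hf : Cadlag f) (c : ℝ) :
    Function.leftLim (fun s => c + f s) t = c + Function.leftLim f t :=
  leftLim_of_tendsto ((hf.2 t ht).const_add c)

/-! ### Part F : first passage facts -/

section FirstPassage

variable {f : ℝ → ℝ}

lemma tauP_of_ex (h : ∃ t : ℝ, 0 ≤ t ∧ f t ≤ 0) :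
    tauP f = ENNReal.ofReal (sInf {t : ℝ | 0 ≤ t ∧ f t ≤ 0}) := if_pos h

lemma tauP_of_not (h : ¬ ∃ t : ℝ, 0 ≤ t ∧ f t ≤ 0) : tauP f = ∞ := if_neg h

lemma fp_bdd : BddBelow {t : ℝ | 0 ≤ t ∧ f t ≤ 0} := ⟨0, fun _ ht => ht.1⟩

lemma fp_nonneg (h : ∃ t : ℝ, 0 ≤ t ∧ f t ≤ 0) :
    0 ≤ sInf {t : ℝ | 0 ≤ t ∧ f t ≤ 0} := le_csInf h (fun _ ht => ht.1)

/-- the infimum is attained thanks to right continuity -/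
lemma fp_mem (hrc : ∀ t ≥ (0:ℝ), ContinuousWithinAt f (Set.Ici t) t)
    (h : ∃ t : ℝ, 0 ≤ t ∧ f t ≤ 0) :
    f (sInf {t : ℝ | 0 ≤ t ∧ f t ≤ 0}) ≤ 0 := by
  set S := {t : ℝ | 0 ≤ t ∧ f t ≤ 0} with hSdef
  set T := sInf S with hT
  have hne : S.Nonempty := h
  have hsel : ∀ n : ℕ, ∃ a ∈ S, a < T + 1/(n+1) := by
    intro n
    exact Real.lt_sInf_add_pos hne (by positivity)
  choose u hu hu' using hsel
  have huT : ∀ n, T ≤ u n := fun n => csInf_le fp_bdd (hu n)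
  have hlim : Tendsto u atTop (nhds T) := by
    have h1 : Tendsto (fun n : ℕ => T + 1/(n+1 : ℝ)) atTop (nhds (T + 0)) := by
      apply Tendsto.const_add
      exact tendsto_one_div_add_atTop_nhds_zero_nat
    rw [add_zero] at h1
    exact tendsto_of_tendsto_of_tendsto_of_le_of_le tendsto_const_nhds h1 huT
      (fun n => (hu' n).le)
  have hT0 : 0 ≤ T := fp_nonneg h
  have hten : Tendsto u atTop (nhdsWithin T (Set.Ici T)) := by
    rw [tendsto_nhdsWithin_iff]
    exact ⟨hlim, Eventually.of_forall huT⟩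
  have := ((hrc T hT0).tendsto).comp hten
  exact le_of_tendsto this (Eventually.of_forall (fun n => (hu n).2))

lemma fp_pos_before (h : ∃ t : ℝ, 0 ≤ t ∧ f t ≤ 0) {t : ℝ} (ht0 : 0 ≤ t)
    (ht : t < sInf {t : ℝ | 0 ≤ t ∧ f t ≤ 0}) : 0 < f t := by
  by_contra hc
  push_neg at hc
  exact absurd (csInf_le fp_bdd ⟨ht0, hc⟩) (not_le.2 ht)

lemma fp_pos (hrc : ∀ t ≥ (0:ℝ), ContinuousWithinAt f (Set.Ici t) t)
    (hx : 0 < f 0) (h : ∃ t : ℝ, 0 ≤ t ∧ f t ≤ 0) :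
    0 < sInf {t : ℝ | 0 ≤ t ∧ f t ≤ 0} := by
  rcases lt_or_eq_of_le (fp_nonneg h) with h' | h'
  · exact h'
  · exfalso
    have := fp_mem hrc h
    rw [← h'] at this
    exact absurd hx (not_lt.2 this)

/-- computation of `sInf` when we know a first passage point -/
lemma fp_eq (h : ∃ t : ℝ, 0 ≤ t ∧ f t ≤ 0) {T' : ℝ} (h3 : 0 ≤ T')
    (h1 : ∀ t, 0 ≤ t → t < T' → 0 < f t) (h2 : f T' ≤ 0) :
    sInf {t : ℝ | 0 ≤ t ∧ f t ≤ 0} = T' := by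
  apply le_antisymm (csInf_le fp_bdd ⟨h3, h2⟩)
  apply le_csInf h
  intro t ht
  by_contra hc
  push_neg at hc
  exact absurd ht.2 (not_le.2 (h1 t ht.1 hc))

lemma fp_leftLim_nonneg (hf : Cadlag f) (hx : 0 < f 0)
    (h : ∃ t : ℝ, 0 ≤ t ∧ f t ≤ 0) :
    0 ≤ Function.leftLim f (sInf {t : ℝ | 0 ≤ t ∧ f t ≤ 0}) := by
  set T := sInf {t : ℝ | 0 ≤ t ∧ f t ≤ 0} with hT
  have hTpos : 0 < T := fp_pos hf.1 hx h
  have hten := hf.2 T hTpos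
  refine ge_of_tendsto hten ?_
  filter_upwards [Ioo_mem_nhdsLT hTpos] with s hs
  exact (fp_pos_before h hs.1.le hs.2).le

lemma tauP_ne_top (h : ∃ t : ℝ, 0 ≤ t ∧ f t ≤ 0) : tauP f ≠ ∞ := by
  rw [tauP_of_ex h]; exact ENNReal.ofReal_ne_top

lemma tauP_toReal (h : ∃ t : ℝ, 0 ≤ t ∧ f t ≤ 0) :
    (tauP f).toReal = sInf {t : ℝ | 0 ≤ t ∧ f t ≤ 0} := by
  rw [tauP_of_ex h, ENNReal.toReal_ofReal (fp_nonneg h)]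

lemma tauP_ne_zero (hrc : ∀ t ≥ (0:ℝ), ContinuousWithinAt f (Set.Ici t) t)
    (hx : 0 < f 0) : tauP f ≠ 0 := by
  by_cases h : ∃ t : ℝ, 0 ≤ t ∧ f t ≤ 0
  · rw [tauP_of_ex h]
    simp only [ne_eq, ENNReal.ofReal_eq_zero, not_le]
    exact fp_pos hrc hx h
  · rw [tauP_of_not h]; exact ENNReal.top_ne_zero

lemma tauP_pos (hrc : ∀ t ≥ (0:ℝ), ContinuousWithinAt f (Set.Ici t) t)
    (hx : 0 < f 0) : 0 < tauP f := pos_iff_ne_zero.2 (tauP_ne_zero hrc hx)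

end FirstPassage



/-! ### Part R : structure of the resurrected sequence -/

lemma ex_of_tauP_ne_top {f : ℝ → ℝ} (h : tauP f ≠ ∞) : ∃ t : ℝ, 0 ≤ t ∧ f t ≤ 0 := by
  by_contra hc; exact h (tauP_of_not hc)

lemma resSeq_succ_of_top {f : ℝ → ℝ} {n : ℕ} (h : tauP (resSeq f n) = ∞) :
    resSeq f (n + 1) = resSeq f n := by
  show (if tauP (resSeq f n) = ∞ then resSeq f n else _) = resSeq f n
  rw [if_pos h]

lemma resSeq_succ_eq {f : ℝ → ℝ} {n : ℕ} (h : tauP (resSeq f n) ≠ ∞)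
    (h0 : tauP (resSeq f n) ≠ 0) :
    resSeq f (n + 1) = fun t =>
      if t < (tauP (resSeq f n)).toReal then resSeq f n t
      else resSeq f n t -
        (resSeq f n (tauP (resSeq f n)).toReal - preVal (resSeq f n) (tauP (resSeq f n))) := by
  show (if tauP (resSeq f n) = ∞ then resSeq f n else _) = _
  rw [if_neg h]
  funext t
  rcases le_or_gt 0 t with ht | ht
  · simp only [ENNReal.ofReal_lt_iff_lt_toReal ht h]
  · have h1 : ENNReal.ofReal t < tauP (resSeq f n) := by
      rw [ENNReal.ofReal_of_nonpos ht.le]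
      exact pos_iff_ne_zero.2 h0
    have h2 : t < (tauP (resSeq f n)).toReal := lt_of_lt_of_le ht ENNReal.toReal_nonneg
    simp only [if_pos h1, if_pos h2]

lemma cadlag_step {g : ℝ → ℝ} (hg : Cadlag g) {T : ℝ} (hT : 0 < T) (c : ℝ) :
    Cadlag (fun t => if t < T then g t else g t - c) := by
  constructor
  · intro t ht
    rcases lt_or_ge t T with htT | htT
    · apply (hg.1 t ht).congr_of_eventuallyEq
      · filter_upwards [mem_nhdsWithin_of_mem_nhds (Iio_mem_nhds htT)] with s hs
        exact if_pos (mem_Iio.mp hs)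
      · exact if_pos htT
    · have hconst : ContinuousWithinAt (fun _ : ℝ => c) (Set.Ici t) t := continuousWithinAt_const
      apply ((hg.1 t ht).sub hconst).congr
      · intro s hs
        exact if_neg (not_lt.2 (le_trans htT hs))
      · exact if_neg (not_lt.2 htT)
  · intro t ht
    rcases le_or_gt t T with htT | htT
    · have h1 : Tendsto (fun s => if s < T then g s else g s - c)
          (nhdsWithin t (Set.Iio t)) (nhds (Function.leftLim g t)) := by
        apply (hg.2 t ht).congr'
        filter_upwards [self_mem_nhdsWithin] with s hs
        exact (if_pos (lt_of_lt_of_le hs htT)).symm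
      rw [leftLim_of_tendsto h1]; exact h1
    · have h1 : Tendsto (fun s => if s < T then g s else g s - c)
          (nhdsWithin t (Set.Iio t)) (nhds (Function.leftLim g t - c)) := by
        apply ((hg.2 t (lt_trans hT htT)).sub_const c).congr'
        filter_upwards [Ioo_mem_nhdsLT htT] with s hs
        exact (if_neg (not_lt.2 hs.1.le)).symm
      rw [leftLim_of_tendsto h1]; exact h1

lemma resSeq_pkg {f : ℝ → ℝ} (hf : Cadlag f) (hx : 0 < f 0) : ∀ n : ℕ,
    Cadlag (resSeq f n) ∧ resSeq f n 0 = f 0 ∧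
    ∃ c : ℝ, 0 ≤ c ∧
      (∀ t : ℝ, (∀ k, k < n → tauSeq f k ≤ ENNReal.ofReal t) → resSeq f n t = f t + c) ∧
      (∀ t : ℝ, f t ≤ resSeq f n t ∧ resSeq f n t ≤ f t + c) := by
  intro n
  induction n with
  | zero =>
    exact ⟨hf, rfl, 0, le_refl _, fun t _ => by simp [resSeq], fun t => by simp [resSeq]⟩
  | succ n ih =>
    obtain ⟨hcad, h0, c, hc0, hstruct, hsand⟩ := ih
    by_cases htop : tauP (resSeq f n) = ∞
    · rw [resSeq_succ_of_top htop]
      exact ⟨hcad, h0, c, hc0, fun t ht => hstruct t (fun k hk => ht k (Nat.lt_succ_of_lt hk)),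
        hsand⟩
    · have hg0 : 0 < resSeq f n 0 := h0 ▸ hx
      have hne0 : tauP (resSeq f n) ≠ 0 := tauP_ne_zero hcad.1 hg0
      have hex : ∃ t : ℝ, 0 ≤ t ∧ resSeq f n t ≤ 0 := ex_of_tauP_ne_top htop
      set T := (tauP (resSeq f n)).toReal with hTdef
      have hTs : T = sInf {t : ℝ | 0 ≤ t ∧ resSeq f n t ≤ 0} := tauP_toReal hex
      have hTpos : 0 < T := by rw [hTs]; exact fp_pos hcad.1 hg0 hex
      have hgT : resSeq f n T ≤ 0 := by rw [hTs]; exact fp_mem hcad.1 hex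
      have hpre : preVal (resSeq f n) (tauP (resSeq f n)) = Function.leftLim (resSeq f n) T := by
        rw [preVal, if_neg hne0]
      have hllnn : 0 ≤ Function.leftLim (resSeq f n) T := by
        rw [hTs]; exact fp_leftLim_nonneg hcad hg0 hex
      set c₂ := resSeq f n T - preVal (resSeq f n) (tauP (resSeq f n)) with hc₂
      have hc₂le : c₂ ≤ 0 := by
        rw [hc₂, hpre]; linarith
      rw [resSeq_succ_eq htop hne0]
      refine ⟨cadlag_step hcad hTpos c₂, by exact (if_pos hTpos).trans h0, c - c₂, by linarith,
        ?_, ?_⟩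
      · intro t ht
        have hτ : tauP (resSeq f n) ≤ ENNReal.ofReal t := ht n (Nat.lt_succ_self n)
        have hnt : ¬ t < T := by
          intro hlt
          have : ENNReal.ofReal t < ENNReal.ofReal T := (ENNReal.ofReal_lt_ofReal_iff hTpos).2 hlt
          rw [← ENNReal.ofReal_toReal htop] at hτ
          exact absurd (lt_of_le_of_lt hτ this) (lt_irrefl _)
        simp only [← hTdef, if_neg hnt]
        rw [hstruct t (fun k hk => ht k (Nat.lt_succ_of_lt hk))]
        ring
      · intro t
        rcases lt_or_ge t T with hlt | hle
        · simp only [← hTdef, if_pos hlt]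
          exact ⟨(hsand t).1, le_trans (hsand t).2 (by linarith)⟩
        · simp only [← hTdef, if_neg (not_lt.2 hle)]
          constructor
          · have := (hsand t).1; linarith
          · have := (hsand t).2; linarith

lemma tauSeq_mono {f : ℝ → ℝ} (hf : Cadlag f) (hx : 0 < f 0) (n : ℕ) :
    tauSeq f n ≤ tauSeq f (n + 1) := by
  by_cases htop : tauP (resSeq f n) = ∞
  · rw [tauSeq, tauSeq, resSeq_succ_of_top htop]
  · obtain ⟨hcad, h0, _⟩ := resSeq_pkg hf hx n
    have hg0 : 0 < resSeq f n 0 := h0 ▸ hx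
    have hne0 : tauP (resSeq f n) ≠ 0 := tauP_ne_zero hcad.1 hg0
    have hex : ∃ t : ℝ, 0 ≤ t ∧ resSeq f n t ≤ 0 := ex_of_tauP_ne_top htop
    set T := (tauP (resSeq f n)).toReal with hTdef
    have hTs : T = sInf {t : ℝ | 0 ≤ t ∧ resSeq f n t ≤ 0} := tauP_toReal hex
    have hkey : ∀ t : ℝ, 0 ≤ t ∧ resSeq f (n+1) t ≤ 0 → T ≤ t := by
      intro t ⟨ht0, hle⟩
      by_contra hc
      push_neg at hc
      rw [resSeq_succ_eq htop hne0] at hle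
      simp only [← hTdef, if_pos hc] at hle
      have : 0 < resSeq f n t := by
        rw [hTs] at hc
        exact fp_pos_before hex ht0 hc
      linarith
    rw [tauSeq, tauSeq]
    by_cases hex' : ∃ t : ℝ, 0 ≤ t ∧ resSeq f (n+1) t ≤ 0
    · rw [tauP_of_ex hex', ← ENNReal.ofReal_toReal htop, ← hTdef]
      apply ENNReal.ofReal_le_ofReal
      exact le_csInf hex' (fun t ht => hkey t ht)
    · rw [tauP_of_not hex']; exact le_top

lemma tauSeq_mono' {f : ℝ → ℝ} (hf : Cadlag f) (hx : 0 < f 0) {m n : ℕ} (h : m ≤ n) :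
    tauSeq f m ≤ tauSeq f n :=
  monotone_nat_of_le_succ (tauSeq_mono hf hx) h

lemma tauSeq_pos {f : ℝ → ℝ} (hf : Cadlag f) (hx : 0 < f 0) (n : ℕ) :
    tauSeq f n ≠ 0 := by
  obtain ⟨hcad, h0, _⟩ := resSeq_pkg hf hx n
  exact tauP_ne_zero hcad.1 (h0 ▸ hx)


/-! ### Part A : the deterministic main lemma -/

lemma key_facts {f : ℝ → ℝ} (hf : Cadlag f) (hx : 0 < f 0) (n : ℕ)
    (hfin : tauSeq f n ≠ ∞)
    (hstrict : ∀ k, k < n → tauSeq f k < tauSeq f n) :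
    ∃ c : ℝ, 0 ≤ c ∧
      (∀ t : ℝ, 0 ≤ t → t < (tauSeq f n).toReal → -c < f t ∧ 0 < resSeq f n t) ∧
      f (tauSeq f n).toReal = resSeq f n (tauSeq f n).toReal - c ∧
      Function.leftLim f (tauSeq f n).toReal
        = Function.leftLim (resSeq f n) (tauSeq f n).toReal - c := by
  obtain ⟨hcad, h0, c, hc0, hstruct, hsand⟩ := resSeq_pkg hf hx n
  have hg0 : 0 < resSeq f n 0 := h0 ▸ hx
  have hex : ∃ t : ℝ, 0 ≤ t ∧ resSeq f n t ≤ 0 := ex_of_tauP_ne_top hfin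
  set T := (tauSeq f n).toReal with hTdef
  have hTs : T = sInf {t : ℝ | 0 ≤ t ∧ resSeq f n t ≤ 0} := tauP_toReal hex
  have hTpos : 0 < T := by rw [hTs]; exact fp_pos hcad.1 hg0 hex
  have hofT : ENNReal.ofReal T = tauSeq f n := ENNReal.ofReal_toReal hfin
  refine ⟨c, hc0, ?_, ?_, ?_⟩
  · intro t ht0 htT
    have hgt : 0 < resSeq f n t := by
      rw [hTs] at htT
      exact fp_pos_before hex ht0 htT
    have := (hsand t).2
    exact ⟨by linarith, hgt⟩
  · have hTt : resSeq f n T = f T + c := by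
      apply hstruct
      intro k hk
      rw [hofT]
      exact (hstrict k hk).le
    linarith
  · rcases Nat.eq_zero_or_pos n with hn | hn
    · subst hn
      have hfc : ∀ t : ℝ, f t = resSeq f 0 t - c := by
        intro t
        have := hstruct t (fun k hk => absurd hk (Nat.not_lt_zero k))
        linarith
      have h1 : Tendsto f (nhdsWithin T (Set.Iio T)) (nhds (Function.leftLim (resSeq f 0) T - c)) := by
        apply Tendsto.congr (fun s => (hfc s).symm)
        exact ((hcad.2 T hTpos).sub_const c)
      exact leftLim_of_tendsto h1
    · obtain ⟨m, rfl⟩ := Nat.exists_eq_succ_of_ne_zero hn.ne'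
      set r := (tauSeq f m).toReal with hrdef
      have hmn : tauSeq f m < tauSeq f (m+1) := hstrict m (Nat.lt_succ_self m)
      have hmfin : tauSeq f m ≠ ∞ := (lt_of_lt_of_le hmn le_top).ne_top
      have hrT : r < T := (ENNReal.toReal_lt_toReal hmfin hfin).2 hmn
      have heq : ∀ t : ℝ, r < t → resSeq f (m+1) t = f t + c := by
        intro t htr
        apply hstruct
        intro k hk
        have h1 : tauSeq f k ≤ tauSeq f m := tauSeq_mono' hf hx (Nat.lt_succ_iff.1 hk)
        have h2 : tauSeq f m = ENNReal.ofReal r := (ENNReal.ofReal_toReal hmfin).symm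
        calc tauSeq f k ≤ tauSeq f m := h1
        _ = ENNReal.ofReal r := h2
        _ ≤ ENNReal.ofReal t := ENNReal.ofReal_le_ofReal htr.le
      have h1 : Tendsto f (nhdsWithin T (Set.Iio T))
          (nhds (Function.leftLim (resSeq f (m+1)) T - c)) := by
        apply Tendsto.congr' _ ((hcad.2 T hTpos).sub_const c)
        filter_upwards [Ioo_mem_nhdsLT hrT] with s hs
        have := heq s hs.1
        linarith
      exact leftLim_of_tendsto h1

lemma stab_creep {f : ℝ → ℝ} (hf : Cadlag f) (hx : 0 < f 0) (n : ℕ)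
    (hfin : tauSeq f n ≠ ∞)
    (hmin : ∀ k, k < n → tauSeq f k < tauSeq f (k+1))
    (heq : tauSeq f n = tauSeq f (n+1))
    (hjump : {t : ℝ | 0 < t ∧ t ≤ (tauSeq f n).toReal ∧
        f t - Function.leftLim f t < 0}.Finite) :
    ∃ q : ℚ, (q:ℝ) ≤ 0 ∧ tauP (fun t => f t - q) ≠ ∞ ∧ tauP (fun t => f t - q) ≠ 0 ∧
      preVal (fun t => f t - q) (tauP (fun t => f t - q)) = 0 := by
  obtain ⟨hcad, h0, _⟩ := resSeq_pkg hf hx n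
  obtain ⟨hcad', h0', _⟩ := resSeq_pkg hf hx (n+1)
  have hg0 : 0 < resSeq f n 0 := h0 ▸ hx
  have hg0' : 0 < resSeq f (n+1) 0 := h0' ▸ hx
  have hstrict : ∀ k, k < n → tauSeq f k < tauSeq f n := by
    intro k hk
    calc tauSeq f k < tauSeq f (k+1) := hmin k hk
    _ ≤ tauSeq f n := tauSeq_mono' hf hx hk
  obtain ⟨c, hc0, hbefore, hT, hLL⟩ := key_facts hf hx n hfin hstrict
  set T := (tauSeq f n).toReal with hTdef
  have hex : ∃ t : ℝ, 0 ≤ t ∧ resSeq f n t ≤ 0 := ex_of_tauP_ne_top hfin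
  have hTs : T = sInf {t : ℝ | 0 ≤ t ∧ resSeq f n t ≤ 0} := tauP_toReal hex
  have hTpos : 0 < T := by rw [hTs]; exact fp_pos hcad.1 hg0 hex
  have hne0 : tauP (resSeq f n) ≠ 0 := tauP_ne_zero hcad.1 hg0
  have hgT : resSeq f n T ≤ 0 := by rw [hTs]; exact fp_mem hcad.1 hex
  have hllnn : 0 ≤ Function.leftLim (resSeq f n) T := by
    rw [hTs]; exact fp_leftLim_nonneg hcad hg0 hex
  -- the next path starts at the left limit, which must be ≤ 0 by stabilization
  have hfin' : tauSeq f (n+1) ≠ ∞ := heq ▸ hfin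
  have hex' : ∃ t : ℝ, 0 ≤ t ∧ resSeq f (n+1) t ≤ 0 := ex_of_tauP_ne_top hfin'
  have hT's : (tauSeq f (n+1)).toReal = sInf {t : ℝ | 0 ≤ t ∧ resSeq f (n+1) t ≤ 0} :=
    tauP_toReal hex'
  have hTT' : (tauSeq f (n+1)).toReal = T := by rw [hTdef, heq]
  have hg'T : resSeq f (n+1) T ≤ 0 := by
    have := fp_mem hcad'.1 hex'
    rw [← hT's, hTT'] at this
    exact this
  have hpre : preVal (resSeq f n) (tauP (resSeq f n)) = Function.leftLim (resSeq f n) T := by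
    rw [preVal, if_neg hne0]; rfl
  have hTP : (tauP (resSeq f n)).toReal = T := rfl
  have hg'Teq : resSeq f (n+1) T = Function.leftLim (resSeq f n) T := by
    rw [resSeq_succ_eq hfin hne0]
    simp only [hTP, if_neg (lt_irrefl T), hpre]
    ring
  have hLL0 : Function.leftLim (resSeq f n) T = 0 :=
    le_antisymm (by rw [← hg'Teq]; exact hg'T) hllnn
  have hfLL : Function.leftLim f T = -c := by rw [hLL, hLL0]; ring
  have hfT : f T ≤ -c := by rw [hT]; linarith
  have hbef : ∀ t : ℝ, 0 ≤ t → t < T → -c < f t := fun t h1 h2 => (hbefore t h1 h2).1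
  -- find a rational level q ∈ (-c, β) that is crept
  by_cases hc : c = 0
  · -- creep at level 0
    subst hc
    refine ⟨0, by norm_num, ?_⟩
    have hfun : (fun t => f t - ((0:ℚ):ℝ)) = f := by funext t; simp
    rw [hfun]
    have hexf : ∃ t : ℝ, 0 ≤ t ∧ f t ≤ 0 := ⟨T, hTpos.le, by linarith⟩
    have hsinf : sInf {t : ℝ | 0 ≤ t ∧ f t ≤ 0} = T := by
      apply fp_eq hexf hTpos.le
      · intro t h1 h2
        have := hbef t h1 h2; linarith
      · linarith
    refine ⟨tauP_ne_top hexf, tauP_ne_zero hf.1 hx, ?_⟩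
    rw [preVal, if_neg (tauP_ne_zero hf.1 hx), tauP_toReal hexf, hsinf, hfLL]
    ring
  · have hcpos : 0 < c := lt_of_le_of_ne hc0 (Ne.symm hc)
    -- finite set of candidate jump values
    set Jset := {t : ℝ | 0 < t ∧ t ≤ T ∧ f t - Function.leftLim f t < 0} with hJdef
    have hJ'fin : {t ∈ Jset | -c < f t}.Finite := hjump.subset (fun t ht => ht.1)
    set V : Finset ℝ := insert 0 (hJ'fin.toFinset.image f) with hV
    have hVne : V.Nonempty := ⟨0, Finset.mem_insert_self _ _⟩
    set m := V.min' hVne with hm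
    have hm0 : m ≤ 0 := Finset.min'_le _ _ (Finset.mem_insert_self _ _)
    have hcm : -c < m := by
      rw [hm, Finset.lt_min'_iff]
      intro y hy
      rcases Finset.mem_insert.1 hy with h | h
      · subst h; linarith
      · obtain ⟨t, ht, rfl⟩ := Finset.mem_image.1 h
        exact ((hJ'fin.mem_toFinset).1 ht).2
    obtain ⟨q, hq1, hq2⟩ := exists_rat_btwn hcm
    have hq0 : (q:ℝ) ≤ 0 := by linarith
    refine ⟨q, hq0, ?_⟩
    set F := fun t => f t - (q:ℝ) with hF
    have hFcad : Cadlag F := cadlag_sub_const hf _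
    have hF0 : 0 < F 0 := by rw [hF]; simp only; linarith
    have hexF : ∃ t : ℝ, 0 ≤ t ∧ F t ≤ 0 := ⟨T, hTpos.le, by simp only [hF]; linarith⟩
    set σ := sInf {t : ℝ | 0 ≤ t ∧ F t ≤ 0} with hσ
    have hσpos : 0 < σ := fp_pos hFcad.1 hF0 hexF
    have hFσ : F σ ≤ 0 := fp_mem hFcad.1 hexF
    have hFll : 0 ≤ Function.leftLim F σ := fp_leftLim_nonneg hFcad hF0 hexF
    have hσT : σ < T := by
      have htend : Tendsto f (nhdsWithin T (Set.Iio T)) (nhds (-c)) := by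
        have := hf.2 T hTpos
        rwa [hfLL] at this
      have hev : ∀ᶠ s in nhdsWithin T (Set.Iio T), f s < q :=
        htend.eventually_lt_const hq1
      have hmem : ∀ᶠ s in nhdsWithin T (Set.Iio T), s ∈ Set.Ioo 0 T :=
        eventually_of_mem (Ioo_mem_nhdsLT hTpos) (fun s hs => hs)
      obtain ⟨s, hs1, hs2⟩ := (hev.and hmem).exists
      have : σ ≤ s := csInf_le fp_bdd ⟨hs2.1.le, by simp only [hF]; linarith⟩
      exact lt_of_le_of_lt this hs2.2
    have hllF : Function.leftLim F σ = Function.leftLim f σ - q :=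
      leftLim_of_tendsto ((hf.2 σ hσpos).sub_const (q:ℝ))
    have hcreep : Function.leftLim f σ = q := by
      by_contra hne
      have hgt : (q:ℝ) < Function.leftLim f σ := by
        rcases lt_or_eq_of_le (by rw [hllF] at hFll; linarith : (q:ℝ) ≤ Function.leftLim f σ)
          with h | h
        · exact h
        · exact absurd h.symm hne
      have hjσ : σ ∈ Jset := by
        refine ⟨hσpos, hσT.le, ?_⟩
        have : f σ ≤ q := by simp only [hF] at hFσ; linarith
        linarith
      have hfσc : -c < f σ := hbef σ hσpos.le hσT
      have : f σ ∈ V := Finset.mem_insert_of_mem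
        (Finset.mem_image.2 ⟨σ, (hJ'fin.mem_toFinset).2 ⟨hjσ, hfσc⟩, rfl⟩)
      have hmle : m ≤ f σ := Finset.min'_le _ _ this
      have : f σ ≤ q := by simp only [hF] at hFσ; linarith
      linarith
    refine ⟨tauP_ne_top hexF, tauP_ne_zero hFcad.1 hF0, ?_⟩
    rw [preVal, if_neg (tauP_ne_zero hFcad.1 hF0), tauP_toReal hexF, ← hσ, hllF, hcreep]
    ring

lemma ns_jumps {f : ℝ → ℝ} (hf : Cadlag f) (hx : 0 < f 0)
    (hfin : ∀ k, tauSeq f k ≠ ∞)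
    (hstrict : ∀ k, tauSeq f k < tauSeq f (k+1))
    (hζ : zetaP f ≠ ∞)
    (hjump : ∀ T : ℝ, {t : ℝ | 0 < t ∧ t ≤ T ∧ f t - Function.leftLim f t < 0}.Finite) :
    False := by
  set Z := (zetaP f).toReal with hZ
  have hTmem : ∀ n : ℕ, (tauSeq f n).toReal ∈
      {t : ℝ | 0 < t ∧ t ≤ Z ∧ f t - Function.leftLim f t < 0} := by
    intro n
    have hstrict' : ∀ k, k < n → tauSeq f k < tauSeq f n := by
      intro k hk
      calc tauSeq f k < tauSeq f (k+1) := hstrict k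
      _ ≤ tauSeq f n := tauSeq_mono' hf hx hk
    obtain ⟨hcad, h0, _⟩ := resSeq_pkg hf hx n
    have hg0 : 0 < resSeq f n 0 := h0 ▸ hx
    obtain ⟨c, hc0, hbefore, hT, hLL⟩ := key_facts hf hx n (hfin n) hstrict'
    set T := (tauSeq f n).toReal with hTdef
    have hex : ∃ t : ℝ, 0 ≤ t ∧ resSeq f n t ≤ 0 := ex_of_tauP_ne_top (hfin n)
    have hTs : T = sInf {t : ℝ | 0 ≤ t ∧ resSeq f n t ≤ 0} := tauP_toReal hex
    have hTpos : 0 < T := by rw [hTs]; exact fp_pos hcad.1 hg0 hex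
    have hne0 : tauP (resSeq f n) ≠ 0 := tauP_ne_zero hcad.1 hg0
    have hgT : resSeq f n T ≤ 0 := by rw [hTs]; exact fp_mem hcad.1 hex
    have hllnn : 0 ≤ Function.leftLim (resSeq f n) T := by
      rw [hTs]; exact fp_leftLim_nonneg hcad hg0 hex
    have hjlt : resSeq f n T < Function.leftLim (resSeq f n) T := by
      rcases lt_or_eq_of_le (le_trans hgT hllnn) with h | h
      · exact h
      · exfalso
        have hz1 : resSeq f n T = 0 := by linarith
        have hz2 : Function.leftLim (resSeq f n) T = 0 := by linarith
        have hpre : preVal (resSeq f n) (tauP (resSeq f n)) = Function.leftLim (resSeq f n) T := by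
          rw [preVal, if_neg hne0]; rfl
        have hTP : (tauP (resSeq f n)).toReal = T := rfl
        have hgeq : resSeq f (n+1) = resSeq f n := by
          rw [resSeq_succ_eq (hfin n) hne0]
          funext t
          rw [hTP]
          rcases lt_or_ge t T with h' | h'
          · rw [if_pos h']
          · rw [if_neg (not_lt.2 h'), hpre, hz2, hz1]
            ring
        have : tauSeq f (n+1) = tauSeq f n := by rw [tauSeq, tauSeq, hgeq]
        exact absurd (this ▸ hstrict n) (lt_irrefl _)
    refine ⟨hTpos, ?_, ?_⟩
    · exact ENNReal.toReal_mono hζ (le_iSup (fun k => tauSeq f k) n)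
    · rw [hT, hLL]; linarith
  have hinj : Function.Injective (fun n : ℕ => (tauSeq f n).toReal) := by
    have hsm : StrictMono (fun n : ℕ => (tauSeq f n).toReal) := by
      apply strictMono_nat_of_lt_succ
      intro n
      exact (ENNReal.toReal_lt_toReal (hfin n) (hfin (n+1))).2 (hstrict n)
    exact hsm.injective
  exact absurd (Set.infinite_of_injective_forall_mem hinj hTmem) (hjump Z).not_infinite

lemma main_det {f : ℝ → ℝ} (hf : Cadlag f) (hx : 0 < f 0)
    (hjump : ∀ T : ℝ, {t : ℝ | 0 < t ∧ t ≤ T ∧ f t - Function.leftLim f t < 0}.Finite)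
    (hnoc : ∀ q : ℚ, (q:ℝ) ≤ 0 → ¬ (tauP (fun t => f t - q) < ∞ ∧
      preVal (fun t => f t - q) (tauP (fun t => f t - q)) = 0)) :
    zetaP f = ∞ := by
  by_contra hζ
  have hfin : ∀ k, tauSeq f k ≠ ∞ := by
    intro k hk
    exact hζ (top_le_iff.1 (hk ▸ le_iSup (fun n => tauSeq f n) k))
  by_cases hstr : ∀ k, tauSeq f k < tauSeq f (k+1)
  · exact ns_jumps hf hx hfin hstr hζ hjump
  · push_neg at hstr
    have hex : ∃ k, tauSeq f (k+1) ≤ tauSeq f k := hstr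
    classical
    set n := Nat.find hex with hn
    have hle : tauSeq f (n+1) ≤ tauSeq f n := Nat.find_spec hex
    have heq : tauSeq f n = tauSeq f (n+1) := le_antisymm (tauSeq_mono hf hx n) hle
    have hmin : ∀ k, k < n → tauSeq f k < tauSeq f (k+1) := by
      intro k hk
      have h2 := Nat.find_min hex hk
      push_neg at h2
      exact h2
    obtain ⟨q, hq0, h1, h2, h3⟩ := stab_creep hf hx n (hfin n) hmin heq
      (hjump (tauSeq f n).toReal)
    exact hnoc q hq0 ⟨lt_top_iff_ne_top.2 h1, h3⟩


/-! ### Part B1 : cadlag paths have finitely many big jumps on compacts -/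

lemma tendsto_leftLim_right {g : ℝ → ℝ} (hg : Cadlag g) {τ : ℕ → ℝ} {F : Filter ℕ} [F.NeBot]
    {t' : ℝ} (ht' : 0 ≤ t') (hτ : Tendsto τ F (nhds t')) (hgt : ∀ᶠ k in F, t' < τ k)
    (hF : F ≤ atTop) :
    Tendsto (fun k => Function.leftLim g (τ k)) F (nhds (g t')) := by
  have hsel : ∀ k : ℕ, ∃ σ : ℝ, (t' < τ k → (σ ∈ Set.Ioo t' (τ k) ∧
      dist (g σ) (Function.leftLim g (τ k)) < 1/(k+1))) := by
    intro k
    by_cases h : t' < τ k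
    · have hpos : 0 < τ k := lt_of_le_of_lt ht' h
      have h1 := (hg.2 (τ k) hpos).eventually
        (Metric.ball_mem_nhds (Function.leftLim g (τ k)) (by positivity : (0:ℝ) < 1/(k+1)))
      have h2 : Set.Ioo t' (τ k) ∈ nhdsWithin (τ k) (Set.Iio (τ k)) :=
        Ioo_mem_nhdsLT h
      obtain ⟨σ, hσ1, hσ2⟩ := (h1.and (eventually_of_mem h2 (fun s hs => hs))).exists
      exact ⟨σ, fun _ => ⟨hσ2, by simpa [Real.dist_eq] using hσ1⟩⟩
    · exact ⟨t', fun h' => absurd h' h⟩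
  choose σ hσ using hsel
  have hσmem : ∀ᶠ k in F, σ k ∈ Set.Ioo t' (τ k) ∧
      dist (g (σ k)) (Function.leftLim g (τ k)) < 1/(k+1) := by
    filter_upwards [hgt] with k hk
    exact hσ k hk
  have hσconv : Tendsto σ F (nhds t') := by
    apply tendsto_of_tendsto_of_tendsto_of_le_of_le' tendsto_const_nhds hτ
    · filter_upwards [hσmem] with k hk; exact hk.1.1.le
    · filter_upwards [hσmem] with k hk; exact hk.1.2.le
  have hgσ : Tendsto (fun k => g (σ k)) F (nhds (g t')) := by
    apply ((hg.1 t' ht').tendsto).comp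
    rw [tendsto_nhdsWithin_iff]
    refine ⟨hσconv, ?_⟩
    filter_upwards [hσmem] with k hk; exact hk.1.1.le
  apply hgσ.congr_dist
  apply squeeze_zero' (Eventually.of_forall (fun k => dist_nonneg))
  · filter_upwards [hσmem] with k hk; exact hk.2.le
  · have : Tendsto (fun k : ℕ => 1/((k:ℝ)+1)) atTop (nhds 0) :=
      tendsto_one_div_add_atTop_nhds_zero_nat
    exact this.mono_left hF

lemma tendsto_leftLim_left {g : ℝ → ℝ} (hg : Cadlag g) {τ : ℕ → ℝ} {F : Filter ℕ} [F.NeBot]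
    {t' : ℝ} (ht' : 0 < t') (hτ : Tendsto τ F (nhds t')) (hlt : ∀ᶠ k in F, 0 < τ k ∧ τ k < t')
    (hF : F ≤ atTop) :
    Tendsto (fun k => Function.leftLim g (τ k)) F (nhds (Function.leftLim g t')) := by
  have hsel : ∀ k : ℕ, ∃ σ : ℝ, (0 < τ k → (σ ∈ Set.Ioo (τ k - 1/(k+1)) (τ k) ∧
      dist (g σ) (Function.leftLim g (τ k)) < 1/(k+1))) := by
    intro k
    by_cases h : 0 < τ k
    · have h1 := (hg.2 (τ k) h).eventually
        (Metric.ball_mem_nhds (Function.leftLim g (τ k)) (by positivity : (0:ℝ) < 1/(k+1)))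
      have h2 : Set.Ioo (τ k - 1/(k+1)) (τ k) ∈ nhdsWithin (τ k) (Set.Iio (τ k)) :=
        Ioo_mem_nhdsLT (by nlinarith [show (0:ℝ) < 1/((k:ℝ)+1) by positivity])
      obtain ⟨σ, hσ1, hσ2⟩ := (h1.and (eventually_of_mem h2 (fun s hs => hs))).exists
      exact ⟨σ, fun _ => ⟨hσ2, by simpa [Real.dist_eq] using hσ1⟩⟩
    · exact ⟨0, fun h' => absurd h' h⟩
  choose σ hσ using hsel
  have hσmem : ∀ᶠ k in F, σ k ∈ Set.Ioo (τ k - 1/(k+1)) (τ k) ∧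
      dist (g (σ k)) (Function.leftLim g (τ k)) < 1/(k+1) := by
    filter_upwards [hlt] with k hk
    exact hσ k hk.1
  have hone : Tendsto (fun k : ℕ => 1/((k:ℝ)+1)) F (nhds 0) :=
    tendsto_one_div_add_atTop_nhds_zero_nat.mono_left hF
  have hσconv : Tendsto σ F (nhds t') := by
    apply tendsto_of_tendsto_of_tendsto_of_le_of_le' (g := fun k => τ k - 1/(k+1)) (h := τ)
    · have := hτ.sub hone; simpa using this
    · exact hτ
    · filter_upwards [hσmem] with k hk; exact hk.1.1.le
    · filter_upwards [hσmem] with k hk; exact hk.1.2.le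
  have hgσ : Tendsto (fun k => g (σ k)) F (nhds (Function.leftLim g t')) := by
    apply (hg.2 t' ht').comp
    rw [tendsto_nhdsWithin_iff]
    refine ⟨hσconv, ?_⟩
    filter_upwards [hσmem, hlt] with k hk hk'
    exact lt_trans hk.1.2 hk'.2
  apply hgσ.congr_dist
  apply squeeze_zero' (Eventually.of_forall (fun k => dist_nonneg))
  · filter_upwards [hσmem] with k hk; exact hk.2.le
  · exact hone

lemma finite_big_jumps {g : ℝ → ℝ} (hg : Cadlag g) {ε u v : ℝ} (hε : 0 < ε) (hu : 0 ≤ u) :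
    {t : ℝ | u < t ∧ t ≤ v ∧ g t - Function.leftLim g t ≤ -ε}.Finite := by
  by_contra hfin
  have hinf : {t : ℝ | u < t ∧ t ≤ v ∧ g t - Function.leftLim g t ≤ -ε}.Infinite := hfin
  set S := {t : ℝ | u < t ∧ t ≤ v ∧ g t - Function.leftLim g t ≤ -ε} with hS
  set e := hinf.natEmbedding with he
  set τ : ℕ → ℝ := fun k => (e k : ℝ) with hτdef
  have hτinj : Function.Injective τ := fun a b h => e.injective (Subtype.ext h)
  have hτmem : ∀ k, τ k ∈ S := fun k => (e k).2
  have hbdd : ∀ k, τ k ∈ Set.Icc u v := fun k => ⟨(hτmem k).1.le, (hτmem k).2.1⟩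
  obtain ⟨t', ht'mem, φ, hφ, hconv⟩ := tendsto_subseq_of_bounded (Metric.isBounded_Icc u v) hbdd
  have ht'Icc : t' ∈ Set.Icc u v := by rwa [IsClosed.closure_eq isClosed_Icc] at ht'mem
  have ht'0 : 0 ≤ t' := le_trans hu ht'Icc.1
  -- classify indices
  have hABC : ({k | t' < τ (φ k)} ∪ {k | τ (φ k) < t'}).Infinite := by
    have hCfin : {k | τ (φ k) = t'}.Finite := by
      apply Set.Subsingleton.finite
      intro k1 h1 k2 h2
      exact hφ.injective (hτinj (h1.trans h2.symm))
    have huniv : {k | t' < τ (φ k)} ∪ {k | τ (φ k) < t'} ∪ {k | τ (φ k) = t'} = Set.univ := by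
      ext k; simp only [Set.mem_union, Set.mem_setOf_eq, Set.mem_univ, iff_true]
      rcases lt_trichotomy (τ (φ k)) t' with h | h | h
      · exact Or.inl (Or.inr h)
      · exact Or.inr h
      · exact Or.inl (Or.inl h)
    by_contra hc
    have := Set.Finite.union (Set.not_infinite.mp hc) hCfin
    rw [huniv] at this
    exact Set.infinite_univ this
  have hjump_le : ∀ k, g (τ (φ k)) - Function.leftLim g (τ (φ k)) ≤ -ε :=
    fun k => (hτmem (φ k)).2.2
  rcases Set.infinite_union.mp hABC with hA | hB
  · -- accumulation from the right
    have hfreq : ∃ᶠ k in atTop, t' < τ (φ k) := Nat.frequently_atTop_iff_infinite.2 hA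
    haveI hne : (atTop ⊓ Filter.principal {k | t' < τ (φ k)}).NeBot :=
      Filter.frequently_iff_neBot.mp hfreq
    set F := atTop ⊓ Filter.principal {k | t' < τ (φ k)} with hF
    have hτF : Tendsto (fun k => τ (φ k)) F (nhds t') := hconv.mono_left inf_le_left
    have hgtF : ∀ᶠ k in F, t' < τ (φ k) :=
      eventually_inf_principal.2 (Eventually.of_forall (fun k hk => hk))
    have h1 : Tendsto (fun k => g (τ (φ k))) F (nhds (g t')) := by
      apply ((hg.1 t' ht'0).tendsto).comp
      rw [tendsto_nhdsWithin_iff]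
      exact ⟨hτF, hgtF.mono (fun k hk => hk.le)⟩
    have h2 := tendsto_leftLim_right hg ht'0 hτF hgtF inf_le_left
    have h3 : Tendsto (fun k => g (τ (φ k)) - Function.leftLim g (τ (φ k))) F (nhds 0) := by
      have := h1.sub h2; simpa using this
    have : (0:ℝ) ≤ -ε := le_of_tendsto_of_tendsto' h3 tendsto_const_nhds
      (fun k => hjump_le k)
    linarith
  · -- accumulation from the left
    have hfreq : ∃ᶠ k in atTop, τ (φ k) < t' := Nat.frequently_atTop_iff_infinite.2 hB
    haveI hne : (atTop ⊓ Filter.principal {k | τ (φ k) < t'}).NeBot :=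
      Filter.frequently_iff_neBot.mp hfreq
    set F := atTop ⊓ Filter.principal {k | τ (φ k) < t'} with hF
    have hτF : Tendsto (fun k => τ (φ k)) F (nhds t') := hconv.mono_left inf_le_left
    have hltF : ∀ᶠ k in F, 0 < τ (φ k) ∧ τ (φ k) < t' := by
      apply (eventually_inf_principal.2 (Eventually.of_forall (fun k hk => hk))).mono
      intro k hk
      exact ⟨lt_of_le_of_lt hu (hτmem (φ k)).1, hk⟩
    have ht'pos : 0 < t' := by
      obtain ⟨k, hk⟩ := hB.nonempty
      exact lt_trans (lt_of_le_of_lt hu (hτmem (φ k)).1) hk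
    have h1 : Tendsto (fun k => g (τ (φ k))) F (nhds (Function.leftLim g t')) := by
      apply (hg.2 t' ht'pos).comp
      rw [tendsto_nhdsWithin_iff]
      exact ⟨hτF, hltF.mono (fun k hk => hk.2)⟩
    have h2 := tendsto_leftLim_left hg ht'pos hτF hltF inf_le_left
    have h3 : Tendsto (fun k => g (τ (φ k)) - Function.leftLim g (τ (φ k))) F (nhds 0) := by
      have := h1.sub h2; simpa using this
    have : (0:ℝ) ≤ -ε := le_of_tendsto_of_tendsto' h3 tendsto_const_nhds
      (fun k => hjump_le k)
    linarith


/-! ### Part B2 : rational characterization of jump events -/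

/-- the rational approximation property for a jump in `(u, u+1]` with size in `[a,b]` -/
def JumpApprox (g : ℝ → ℝ) (u a b : ℝ) : Prop :=
  ∀ n : ℕ, ∃ p q : ℚ, u < (p:ℝ) ∧ (p:ℝ) ≤ u + 1 ∧ (p:ℝ) < (q:ℝ) ∧
    (q:ℝ) < (p:ℝ) + 1/(n+1) ∧ g q - g p ∈ Set.Icc (a - 1/(n+1)) (b + 1/(n+1))

lemma jumpApprox_of_jump {g : ℝ → ℝ} (hg : Cadlag g) {u a b t : ℝ} (hu : 0 ≤ u)
    (ht1 : u < t) (ht2 : t ≤ u + 1) (hjump : g t - Function.leftLim g t ∈ Set.Icc a b) :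
    JumpApprox g u a b := by
  intro n
  set δ : ℝ := 1/(n+1) with hδ
  have hδpos : 0 < δ := by positivity
  set L := Function.leftLim g t with hL
  have htpos : 0 < t := lt_of_le_of_lt hu ht1
  -- left point p
  have hev1 : {s : ℝ | |g s - L| < δ/2} ∈ nhdsWithin t (Set.Iio t) := by
    have := (hg.2 t htpos).eventually (Metric.ball_mem_nhds L (by positivity : (0:ℝ) < δ/2))
    exact (by simpa [Real.dist_eq] using this : ∀ᶠ s in nhdsWithin t (Set.Iio t), |g s - L| < δ/2)
  obtain ⟨c, hc, hsub⟩ := mem_nhdsLT_iff_exists_Ioo_subset.mp hev1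
  have hmax : max c (max u (t - δ/2)) < t := by
    simp only [max_lt_iff]
    exact ⟨hc, ht1, by linarith⟩
  obtain ⟨p, hp1, hp2⟩ := exists_rat_btwn hmax
  have hpu : u < (p:ℝ) := lt_of_le_of_lt (le_max_left _ _ |>.trans (le_max_right c _)) hp1
  have hpδ : t - δ/2 < (p:ℝ) := lt_of_le_of_lt (le_max_right _ _ |>.trans (le_max_right c _)) hp1
  have hpc : c < (p:ℝ) := lt_of_le_of_lt (le_max_left _ _) hp1
  have hpL : |g p - L| < δ/2 := hsub ⟨hpc, hp2⟩
  -- right point q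
  have hev2 : {s : ℝ | |g s - g t| < δ/2} ∈ nhdsWithin t (Set.Ici t) := by
    have := (hg.1 t htpos.le).tendsto.eventually
      (Metric.ball_mem_nhds (g t) (by positivity : (0:ℝ) < δ/2))
    exact (by simpa [Real.dist_eq] using this : ∀ᶠ s in nhdsWithin t (Set.Ici t), |g s - g t| < δ/2)
  obtain ⟨c', hc', hsub'⟩ := mem_nhdsGE_iff_exists_Ico_subset.mp hev2
  have hmin : t < min c' ((p:ℝ) + δ) := by
    simp only [lt_min_iff]
    exact ⟨hc', by linarith⟩
  obtain ⟨q, hq1, hq2⟩ := exists_rat_btwn hmin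
  have hqc' : (q:ℝ) < c' := lt_of_lt_of_le hq2 (min_le_left _ _)
  have hqpδ : (q:ℝ) < (p:ℝ) + δ := lt_of_lt_of_le hq2 (min_le_right _ _)
  have hqt : |g q - g t| < δ/2 := hsub' ⟨hq1.le, hqc'⟩
  refine ⟨p, q, hpu, by linarith, by linarith [hp2, hq1], hqpδ, ?_⟩
  rw [abs_lt] at hpL hqt
  obtain ⟨hja, hjb⟩ := hjump
  constructor
  · have : g t - L = g t - L := rfl
    nlinarith [hpL.1, hpL.2, hqt.1, hqt.2]
  · nlinarith [hpL.1, hpL.2, hqt.1, hqt.2]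

lemma jump_of_jumpApprox {g : ℝ → ℝ} (hg : Cadlag g) {u a b : ℝ} (hu : 0 ≤ u) (hb : b < 0)
    (H : JumpApprox g u a b) :
    ∃ t : ℝ, u < t ∧ t ≤ u + 1 ∧ g t - Function.leftLim g t ∈ Set.Icc a b := by
  choose p q hp1 hp2 hpq hq hmem using H
  set P : ℕ → ℝ := fun n => ((p n : ℚ) : ℝ) with hP
  set Q : ℕ → ℝ := fun n => ((q n : ℚ) : ℝ) with hQ
  have hPbdd : ∀ n, P n ∈ Set.Icc u (u+1) := fun n => ⟨(hp1 n).le, hp2 n⟩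
  obtain ⟨t, htmem, φ, hφ, hPconv⟩ := tendsto_subseq_of_bounded (Metric.isBounded_Icc u (u+1)) hPbdd
  have htIcc : t ∈ Set.Icc u (u+1) := by rwa [IsClosed.closure_eq isClosed_Icc] at htmem
  have ht0 : 0 ≤ t := le_trans hu htIcc.1
  have hone : Tendsto (fun k : ℕ => 1/((φ k : ℝ)+1)) atTop (nhds 0) := by
    apply Tendsto.comp tendsto_one_div_add_atTop_nhds_zero_nat hφ.tendsto_atTop
  have hQconv : Tendsto (fun k => Q (φ k)) atTop (nhds t) := by
    have hdiff : Tendsto (fun k => Q (φ k) - P (φ k)) atTop (nhds 0) := by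
      apply squeeze_zero' (Eventually.of_forall (fun k => (sub_nonneg.2 (hpq (φ k)).le)))
        (Eventually.of_forall (fun k => (by linarith [hq (φ k)] : Q (φ k) - P (φ k) ≤ 1/((φ k : ℝ)+1))))
      exact hone
    have := hPconv.add hdiff
    simpa using this
  -- dichotomy
  have hAfin : {k | t ≤ P (φ k)}.Finite := by
    by_contra hA
    have hfreq : ∃ᶠ k in atTop, t ≤ P (φ k) := Nat.frequently_atTop_iff_infinite.2 hA
    haveI hne : (atTop ⊓ Filter.principal {k | t ≤ P (φ k)}).NeBot :=
      Filter.frequently_iff_neBot.mp hfreq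
    set F := atTop ⊓ Filter.principal {k | t ≤ P (φ k)} with hF
    have hmemF : ∀ᶠ k in F, t ≤ P (φ k) :=
      eventually_inf_principal.2 (Eventually.of_forall (fun k hk => hk))
    have hPF : Tendsto (fun k => P (φ k)) F (nhds t) := hPconv.mono_left inf_le_left
    have hQF : Tendsto (fun k => Q (φ k)) F (nhds t) := hQconv.mono_left inf_le_left
    have h1 : Tendsto (fun k => g (P (φ k))) F (nhds (g t)) := by
      apply ((hg.1 t ht0).tendsto).comp
      rw [tendsto_nhdsWithin_iff]
      exact ⟨hPF, hmemF⟩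
    have h2 : Tendsto (fun k => g (Q (φ k))) F (nhds (g t)) := by
      apply ((hg.1 t ht0).tendsto).comp
      rw [tendsto_nhdsWithin_iff]
      refine ⟨hQF, ?_⟩
      filter_upwards [hmemF] with k hk
      exact le_trans hk (hpq (φ k)).le
    have h3 : Tendsto (fun k => g (Q (φ k)) - g (P (φ k))) F (nhds 0) := by
      have := h2.sub h1; simpa using this
    have hble : Tendsto (fun k => b + 1/((φ k:ℝ)+1)) F (nhds b) := by
      have := (hone.mono_left (inf_le_left : F ≤ atTop)).const_add b
      simpa using this
    have : (0:ℝ) ≤ b := le_of_tendsto_of_tendsto' h3 hble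
      (fun k => (hmem (φ k)).2)
    linarith
  have hBfin : {k | Q (φ k) < t}.Finite := by
    by_contra hB
    have hfreq : ∃ᶠ k in atTop, Q (φ k) < t := Nat.frequently_atTop_iff_infinite.2 hB
    haveI hne : (atTop ⊓ Filter.principal {k | Q (φ k) < t}).NeBot :=
      Filter.frequently_iff_neBot.mp hfreq
    set F := atTop ⊓ Filter.principal {k | Q (φ k) < t} with hF
    have hmemF : ∀ᶠ k in F, Q (φ k) < t :=
      eventually_inf_principal.2 (Eventually.of_forall (fun k hk => hk))
    have htu : u < t := by
      obtain ⟨k, hk⟩ := Set.Infinite.nonempty hB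
      calc u < P (φ k) := hp1 (φ k)
      _ < Q (φ k) := hpq (φ k)
      _ < t := hk
    have htpos : 0 < t := lt_of_le_of_lt hu htu
    have hPF : Tendsto (fun k => P (φ k)) F (nhds t) := hPconv.mono_left inf_le_left
    have hQF : Tendsto (fun k => Q (φ k)) F (nhds t) := hQconv.mono_left inf_le_left
    have h1 : Tendsto (fun k => g (P (φ k))) F (nhds (Function.leftLim g t)) := by
      apply (hg.2 t htpos).comp
      rw [tendsto_nhdsWithin_iff]
      refine ⟨hPF, ?_⟩
      filter_upwards [hmemF] with k hk
      exact lt_trans (hpq (φ k)) hk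
    have h2 : Tendsto (fun k => g (Q (φ k))) F (nhds (Function.leftLim g t)) := by
      apply (hg.2 t htpos).comp
      rw [tendsto_nhdsWithin_iff]
      exact ⟨hQF, hmemF⟩
    have h3 : Tendsto (fun k => g (Q (φ k)) - g (P (φ k))) F (nhds 0) := by
      have := h2.sub h1; simpa using this
    have hble : Tendsto (fun k => b + 1/((φ k:ℝ)+1)) F (nhds b) := by
      have := (hone.mono_left (inf_le_left : F ≤ atTop)).const_add b
      simpa using this
    have : (0:ℝ) ≤ b := le_of_tendsto_of_tendsto' h3 hble (fun k => (hmem (φ k)).2)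
    linarith
  -- the straddling case happens cofinitely often
  have hCinf : {k | P (φ k) < t ∧ t ≤ Q (φ k)}.Infinite := by
    have : {k | P (φ k) < t ∧ t ≤ Q (φ k)} = ({k | t ≤ P (φ k)} ∪ {k | Q (φ k) < t})ᶜ := by
      ext k
      simp only [Set.mem_setOf_eq, Set.mem_compl_iff, Set.mem_union, not_or, not_le, not_lt]
    rw [this]
    apply Set.Finite.infinite_compl (hAfin.union hBfin)
  have hfreq : ∃ᶠ k in atTop, P (φ k) < t ∧ t ≤ Q (φ k) :=
    Nat.frequently_atTop_iff_infinite.2 hCinf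
  haveI hne : (atTop ⊓ Filter.principal {k | P (φ k) < t ∧ t ≤ Q (φ k)}).NeBot :=
    Filter.frequently_iff_neBot.mp hfreq
  set F := atTop ⊓ Filter.principal {k | P (φ k) < t ∧ t ≤ Q (φ k)} with hF
  have hmemF : ∀ᶠ k in F, P (φ k) < t ∧ t ≤ Q (φ k) :=
    eventually_inf_principal.2 (Eventually.of_forall (fun k hk => hk))
  have htu : u < t := by
    obtain ⟨k, hk⟩ := Set.Infinite.nonempty hCinf
    exact lt_trans (hp1 (φ k)) hk.1
  have htpos : 0 < t := lt_of_le_of_lt hu htu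
  have hPF : Tendsto (fun k => P (φ k)) F (nhds t) := hPconv.mono_left inf_le_left
  have hQF : Tendsto (fun k => Q (φ k)) F (nhds t) := hQconv.mono_left inf_le_left
  have h1 : Tendsto (fun k => g (P (φ k))) F (nhds (Function.leftLim g t)) := by
    apply (hg.2 t htpos).comp
    rw [tendsto_nhdsWithin_iff]
    refine ⟨hPF, ?_⟩
    filter_upwards [hmemF] with k hk
    exact hk.1
  have h2 : Tendsto (fun k => g (Q (φ k))) F (nhds (g t)) := by
    apply ((hg.1 t ht0).tendsto).comp
    rw [tendsto_nhdsWithin_iff]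
    refine ⟨hQF, ?_⟩
    filter_upwards [hmemF] with k hk
    exact hk.2
  have h3 : Tendsto (fun k => g (Q (φ k)) - g (P (φ k))) F
      (nhds (g t - Function.leftLim g t)) := h2.sub h1
  have hble : Tendsto (fun k => b + 1/((φ k:ℝ)+1)) F (nhds b) := by
    have := (hone.mono_left (inf_le_left : F ≤ atTop)).const_add b
    simpa using this
  have hale : Tendsto (fun k => a - 1/((φ k:ℝ)+1)) F (nhds a) := by
    have := ((hone.mono_left (inf_le_left : F ≤ atTop)).const_sub a)
    simpa using this
  refine ⟨t, htu, htIcc.2, ?_, ?_⟩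
  · exact le_of_tendsto_of_tendsto' hale h3 (fun k => (hmem (φ k)).1)
  · exact le_of_tendsto_of_tendsto' h3 hble (fun k => (hmem (φ k)).2)



/-! ### Part B3 : shift invariance of increment events -/

abbrev QNN : Type := {q : ℚ // 0 ≤ q}

def shiftInc {Ω : Type*} (X : ℝ → Ω → ℝ) (j : ℝ) (ω : Ω) : QNN → ℝ :=
  fun q => X (j + ((q : ℚ) : ℝ)) ω - X j ω

section FDD

variable {Ω : Type*} [MeasurableSpace Ω] {P : Measure Ω} [IsProbabilityMeasure P]
  {X : ℝ → Ω → ℝ}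

lemma measurable_shiftInc (hm : ∀ t, Measurable (X t)) (j : ℝ) :
    Measurable (shiftInc X j) :=
  measurable_pi_lambda _ (fun q => (hm _).sub (hm j))

lemma map_restrict_shiftInc (hX : IsLevy P X) {j : ℝ} (hj : 0 ≤ j) (I : Finset QNN) :
    Measure.map (fun ω => I.restrict (shiftInc X j ω)) P
      = Measure.map (fun ω => I.restrict (shiftInc X (0:ℝ) ω)) P := by
  rcases Nat.eq_zero_or_pos I.card with hk | hkpos
  · have hempty : IsEmpty {x // x ∈ I} := by
      rw [Finset.card_eq_zero] at hk
      subst hk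
      exact ⟨fun i => (Finset.notMem_empty _ i.2)⟩
    have : (fun ω => I.restrict (shiftInc X j ω)) = (fun ω => I.restrict (shiftInc X (0:ℝ) ω)) := by
      funext ω
      funext i
      exact (hempty.elim i)
    rw [this]
  · set k := I.card with hkdef
    set e : Fin k ≃o {x // x ∈ I} := I.orderIsoOfFin rfl with he
    set v : Fin k → ℝ := fun i => ((((e i : {x // x ∈ I}) : QNN) : ℚ) : ℝ) with hv
    have hv0 : ∀ i, 0 ≤ v i := by
      intro i
      simp only [hv]
      exact Rat.cast_nonneg.mpr (((e i : {x // x ∈ I}) : QNN).2)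
    have hvmono : Monotone v := by
      intro i1 i2 h
      have h2 : (e i1) ≤ (e i2) := e.monotone h
      have h3 : ((e i1 : {x // x ∈ I}) : QNN) ≤ ((e i2 : {x // x ∈ I}) : QNN) :=
        Subtype.coe_le_coe.mpr h2
      have h4 : (((e i1 : {x // x ∈ I}) : QNN) : ℚ) ≤ (((e i2 : {x // x ∈ I}) : QNN) : ℚ) :=
        Subtype.coe_le_coe.mpr h3
      simp only [hv]
      exact Rat.cast_le.mpr h4
    set w : ℕ → ℝ := fun m => if m = 0 then 0 else v ⟨min (m-1) (k-1), by omega⟩ with hw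
    have hw0 : w 0 = 0 := by simp [hw]
    have hwnn : ∀ m, 0 ≤ w m := by
      intro m
      by_cases h : m = 0
      · simp [hw, h]
      · simp only [hw, if_neg h]
        exact hv0 _
    have hwmono : Monotone w := by
      intro m1 m2 h
      by_cases h1 : m1 = 0
      · subst h1
        rw [hw0]
        exact hwnn m2
      · have h2 : m2 ≠ 0 := by omega
        simp only [hw, if_neg h1, if_neg h2]
        apply hvmono
        simp only [Fin.mk_le_mk]
        omega
    have hwsucc : ∀ i : Fin k, w ((i:ℕ)+1) = v i := by
      intro i
      have hik := i.2
      simp only [hw, if_neg (Nat.succ_ne_zero _)]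
      congr 1
      apply Fin.ext
      simp only []
      omega
    -- joint law of the increment vector started at u
    have hjoint : ∀ u : ℝ, 0 ≤ u →
        Measure.map (fun ω => fun i : Fin k =>
            X ((fun m => u + w m) ((i:ℕ)+1)) ω - X ((fun m => u + w m) (i:ℕ)) ω) P
          = Measure.pi (fun i : Fin k => Measure.map (X (w ((i:ℕ)+1) - w (i:ℕ))) P) := by
      intro u hu
      haveI hprob : ∀ i : Fin k, IsProbabilityMeasure (Measure.map (X (w ((i:ℕ)+1) - w (i:ℕ))) P) :=
        fun i => Measure.isProbabilityMeasure_map (hX.measurable _).aemeasurable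
      symm
      apply Measure.pi_eq
      intro s hs
      have hmeasD : ∀ i : Fin k, Measurable (fun ω =>
          X ((fun m => u + w m) ((i:ℕ)+1)) ω - X ((fun m => u + w m) (i:ℕ)) ω) :=
        fun i => (hX.measurable _).sub (hX.measurable _)
      have hmeasvec : Measurable (fun ω => fun i : Fin k =>
          X ((fun m => u + w m) ((i:ℕ)+1)) ω - X ((fun m => u + w m) (i:ℕ)) ω) :=
        measurable_pi_lambda _ hmeasD
      rw [Measure.map_apply hmeasvec (MeasurableSet.univ_pi hs)]
      have hgridmono : Monotone (fun m : ℕ => u + w m) :=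
        fun m1 m2 h => add_le_add le_rfl (hwmono h)
      have hgrid0 : 0 ≤ (fun m : ℕ => u + w m) 0 := by
        simp only [hw0]
        simpa using hu
      have hindep := hX.indep_incr k (fun m => u + w m) hgridmono hgrid0
      have hpre : (fun ω => fun i : Fin k =>
            X ((fun m => u + w m) ((i:ℕ)+1)) ω - X ((fun m => u + w m) (i:ℕ)) ω) ⁻¹'
            (Set.univ.pi s)
          = ⋂ i ∈ Finset.univ, (fun i : Fin k => fun ω =>
              X ((fun m => u + w m) ((i:ℕ)+1)) ω - X ((fun m => u + w m) (i:ℕ)) ω) i ⁻¹' (s i) := by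
        ext ω
        simp [Set.mem_univ_pi]
      rw [hpre, hindep.measure_inter_preimage_eq_mul Finset.univ (fun i _ => hs i)]
      apply Finset.prod_congr rfl
      intro i _
      have harg : (fun ω => X ((fun m => u + w m) ((i:ℕ)+1)) ω - X ((fun m => u + w m) (i:ℕ)) ω)
          = (fun ω => X ((u + w (i:ℕ)) + (w ((i:ℕ)+1) - w (i:ℕ))) ω - X (u + w (i:ℕ)) ω) := by
        funext ω
        congr 2
        ring
      have hstat := hX.stat_incr (u + w (i:ℕ)) (w ((i:ℕ)+1) - w (i:ℕ))
        (by have := hwnn (i:ℕ); linarith)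
        (sub_nonneg.2 (hwmono (Nat.le_succ _)))
      rw [← Measure.map_apply (hmeasD i) (hs i)]
      have : Measure.map (fun ω =>
          X ((fun m => u + w m) ((i:ℕ)+1)) ω - X ((fun m => u + w m) (i:ℕ)) ω) P
          = Measure.map (X (w ((i:ℕ)+1) - w (i:ℕ))) P := by
        rw [harg, hstat]
      rw [this]
    -- partial-sum reconstruction
    set Lmap : (Fin k → ℝ) → ({x // x ∈ I} → ℝ) :=
      fun d i => ∑ m ∈ Finset.range (((e.symm i : Fin k) : ℕ) + 1),
        (if h : m < k then d ⟨m, h⟩ else 0) with hLmap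
    have hLmeas : Measurable Lmap := by
      apply measurable_pi_lambda
      intro i
      apply Finset.measurable_sum
      intro m _
      by_cases h : m < k
      · simp only [dif_pos h]
        exact measurable_pi_apply _
      · simp only [dif_neg h]
        exact measurable_const
    have hcompose : ∀ u : ℝ, (fun ω => I.restrict (shiftInc X u ω))
        = Lmap ∘ (fun ω => fun i : Fin k =>
            X ((fun m => u + w m) ((i:ℕ)+1)) ω - X ((fun m => u + w m) (i:ℕ)) ω) := by
      intro u
      funext ω i
      have hrk : ((e.symm i : Fin k) : ℕ) < k := (e.symm i).2
      set r := ((e.symm i : Fin k) : ℕ) with hr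
      have hsum : Lmap (fun i : Fin k =>
            X ((fun m => u + w m) ((i:ℕ)+1)) ω - X ((fun m => u + w m) (i:ℕ)) ω) i
          = ∑ m ∈ Finset.range (r + 1),
            ((fun m => X (u + w m) ω) (m+1) - (fun m => X (u + w m) ω) m) := by
        apply Finset.sum_congr rfl
        intro m hm
        have hmr : m < k := by
          have := Finset.mem_range.1 hm
          omega
        simp only [dif_pos hmr]
      show shiftInc X u ω ↑i = Lmap (fun i : Fin k =>
          X ((fun m => u + w m) ((i:ℕ)+1)) ω - X ((fun m => u + w m) (i:ℕ)) ω) i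
      rw [hsum, Finset.sum_range_sub (fun m => X (u + w m) ω)]
      have hwr : w (r + 1) = v (e.symm i) := hwsucc (e.symm i)
      have hval : v (e.symm i) = (((i : QNN) : ℚ) : ℝ) := by
        simp only [hv]
        rw [e.apply_symm_apply i]
      simp only [hwr, hval, hw0, add_zero]
      rfl
    calc Measure.map (fun ω => I.restrict (shiftInc X j ω)) P
        = Measure.map Lmap (Measure.map (fun ω => fun i : Fin k =>
            X ((fun m => j + w m) ((i:ℕ)+1)) ω - X ((fun m => j + w m) (i:ℕ)) ω) P) := by
          rw [hcompose j]; exact (Measure.map_map hLmeas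
            (measurable_pi_lambda _ (fun i => (hX.measurable _).sub (hX.measurable _)))).symm
      _ = Measure.map Lmap (Measure.map (fun ω => fun i : Fin k =>
            X ((fun m => (0:ℝ) + w m) ((i:ℕ)+1)) ω - X ((fun m => (0:ℝ) + w m) (i:ℕ)) ω) P) := by
          rw [hjoint j hj, hjoint 0 le_rfl]
      _ = Measure.map (fun ω => I.restrict (shiftInc X (0:ℝ) ω)) P := by
          rw [hcompose 0]; exact (Measure.map_map hLmeas
            (measurable_pi_lambda _ (fun i => (hX.measurable _).sub (hX.measurable _))))

lemma map_shiftInc_eq (hX : IsLevy P X) {j : ℝ} (hj : 0 ≤ j) :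
    Measure.map (shiftInc X j) P = Measure.map (shiftInc X (0:ℝ)) P := by
  haveI h1 : IsProbabilityMeasure (Measure.map (shiftInc X j) P) :=
    Measure.isProbabilityMeasure_map (measurable_shiftInc hX.measurable j).aemeasurable
  haveI h2 : IsProbabilityMeasure (Measure.map (shiftInc X (0:ℝ)) P) :=
    Measure.isProbabilityMeasure_map (measurable_shiftInc hX.measurable 0).aemeasurable
  apply ext_of_generate_finite (measurableCylinders (fun _ : QNN => ℝ))
    generateFrom_measurableCylinders.symm isPiSystem_measurableCylinders
  · intro s hs
    obtain ⟨I, S, hS, rfl⟩ := (mem_measurableCylinders s).1 hs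
    have hcyl : ∀ u : ℝ, shiftInc X u ⁻¹' cylinder I S
        = (fun ω => I.restrict (shiftInc X u ω)) ⁻¹' S := by
      intro u
      rfl
    have hrmeas : ∀ u : ℝ, Measurable (fun ω => I.restrict (shiftInc X u ω)) := fun u =>
      measurable_pi_lambda _ (fun i => (hX.measurable _).sub (hX.measurable _))
    rw [Measure.map_apply (measurable_shiftInc hX.measurable j) (hS.cylinder I),
      Measure.map_apply (measurable_shiftInc hX.measurable 0) (hS.cylinder I),
      hcyl, hcyl,
      ← Measure.map_apply (hrmeas j) hS,
      ← Measure.map_apply (hrmeas 0) hS]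
    exact congrFun (congrArg _ (map_restrict_shiftInc hX hj I)) S
  · simp

end FDD


/-! ### Part B4 : probability bounds for jump events -/

def CSet (a b : ℝ) : Set (QNN → ℝ) :=
  ⋂ n : ℕ, ⋃ p : QNN, ⋃ q : QNN, ⋃ (_ : 0 < ((p:ℚ):ℝ) ∧ ((p:ℚ):ℝ) ≤ 1 ∧ ((p:ℚ):ℝ) < ((q:ℚ):ℝ) ∧
    ((q:ℚ):ℝ) < ((p:ℚ):ℝ) + 1/(n+1)),
    {v : QNN → ℝ | v q - v p ∈ Set.Icc (a - 1/(n+1)) (b + 1/(n+1))}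

lemma measurableSet_CSet (a b : ℝ) : MeasurableSet (CSet a b) :=
  MeasurableSet.iInter (fun _ => MeasurableSet.iUnion (fun p => MeasurableSet.iUnion (fun q =>
    MeasurableSet.iUnion (fun _ =>
      ((measurable_pi_apply q).sub (measurable_pi_apply p)) measurableSet_Icc))))

lemma jumpApprox_shift_iff {Ω : Type*} (X : ℝ → Ω → ℝ) (j : ℕ) (a b : ℝ) (ω : Ω) :
    JumpApprox (fun t => X t ω) (j:ℝ) a b ↔ shiftInc X (j:ℝ) ω ∈ CSet a b := by
  constructor
  · intro H
    apply Set.mem_iInter.2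
    intro n
    obtain ⟨p, q, h1, h2, h3, h4, h5⟩ := H n
    have hjp : (j:ℚ) < p := by exact_mod_cast h1
    have hjq : (j:ℚ) < q := by
      have : (j:ℝ) < (q:ℝ) := lt_trans h1 h3
      exact_mod_cast this
    refine Set.mem_iUnion.2 ⟨⟨p - j, by linarith⟩, Set.mem_iUnion.2 ⟨⟨q - j, by linarith⟩,
      Set.mem_iUnion.2 ⟨?_, ?_⟩⟩⟩
    · refine ⟨?_, ?_, ?_, ?_⟩ <;> push_cast <;> [linarith; linarith; linarith; linarith]
    · have e1 : (j:ℝ) + (((q - (j:ℚ)) : ℚ) : ℝ) = (q:ℝ) := by push_cast; ring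
      have e2 : (j:ℝ) + (((p - (j:ℚ)) : ℚ) : ℝ) = (p:ℝ) := by push_cast; ring
      simp only [Set.mem_setOf_eq, shiftInc]
      rw [e1, e2]
      have hXX : X (q:ℝ) ω - X (j:ℝ) ω - (X (p:ℝ) ω - X (j:ℝ) ω) = X (q:ℝ) ω - X (p:ℝ) ω := by
        ring
      rw [hXX]
      exact h5
  · intro H n
    have H' := Set.mem_iInter.1 H n
    obtain ⟨p', hp'⟩ := Set.mem_iUnion.1 H'
    obtain ⟨q', hq'⟩ := Set.mem_iUnion.1 hp'
    obtain ⟨⟨c1, c2, c3, c4⟩, hmem⟩ := Set.mem_iUnion.1 hq'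
    refine ⟨(p' : ℚ) + j, (q' : ℚ) + j, ?_, ?_, ?_, ?_, ?_⟩
    · push_cast; linarith
    · push_cast; linarith
    · push_cast; linarith
    · push_cast; linarith
    · have e1 : (j:ℝ) + (((q') : ℚ) : ℝ) = ((((q' : ℚ) + j : ℚ)) : ℝ) := by push_cast; ring
      have e2 : (j:ℝ) + (((p') : ℚ) : ℝ) = ((((p' : ℚ) + j : ℚ)) : ℝ) := by push_cast; ring
      simp only [Set.mem_setOf_eq, shiftInc] at hmem
      rw [e1, e2] at hmem
      have hXX : X ((((q' : ℚ) + j : ℚ)) : ℝ) ω - X ((((p' : ℚ) + j : ℚ)) : ℝ) ω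
          = X ((((q' : ℚ) + j : ℚ)) : ℝ) ω - X (j:ℝ) ω
            - (X ((((p' : ℚ) + j : ℚ)) : ℝ) ω - X (j:ℝ) ω) := by ring
      rw [hXX]
      exact hmem

section ProbBounds

variable {Ω : Type*} [MeasurableSpace Ω] {P : Measure Ω} [IsProbabilityMeasure P]
  {X : ℝ → Ω → ℝ}

lemma measurableSet_jumpApprox (hX : IsLevy P X) (j : ℕ) (a b : ℝ) :
    MeasurableSet {ω | JumpApprox (fun t => X t ω) (j:ℝ) a b} := by
  have hset : {ω | JumpApprox (fun t => X t ω) (j:ℝ) a b}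
      = shiftInc X (j:ℝ) ⁻¹' CSet a b := by
    ext ω; exact jumpApprox_shift_iff X j a b ω
  rw [hset]
  exact (measurable_shiftInc hX.measurable _) (measurableSet_CSet a b)

lemma prob_jumpApprox_eq (hX : IsLevy P X) (j : ℕ) (a b : ℝ) :
    P {ω | JumpApprox (fun t => X t ω) (j:ℝ) a b}
      = P {ω | JumpApprox (fun t => X t ω) ((0:ℕ):ℝ) a b} := by
  have hset : ∀ j' : ℕ, {ω | JumpApprox (fun t => X t ω) (j':ℝ) a b}
      = shiftInc X (j':ℝ) ⁻¹' CSet a b := by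
    intro j'; ext ω; exact jumpApprox_shift_iff X j' a b ω
  rw [hset j, hset 0,
    ← Measure.map_apply (measurable_shiftInc hX.measurable _) (measurableSet_CSet a b),
    ← Measure.map_apply (measurable_shiftInc hX.measurable _) (measurableSet_CSet a b)]
  congr 1
  rw [map_shiftInc_eq hX (Nat.cast_nonneg j)]
  norm_num

lemma prob_jumpApprox_le (hX : IsLevy P X) {π : Measure ℝ} (hπ : IsLevyMeasure P X π)
    {a b : ℝ} (hb : b < 0) (j : ℕ) :
    P {ω | JumpApprox (fun t => X t ω) (j:ℝ) a b} ≤ π (Set.Icc a b) := by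
  rw [prob_jumpApprox_eq hX j a b]
  have hmeas0 := measurableSet_jumpApprox hX 0 a b
  have hle : ∀ ω, Set.indicator {ω | JumpApprox (fun t => X t ω) ((0:ℕ):ℝ) a b}
      (1 : Ω → ℝ≥0∞) ω ≤ jumpCount (fun t => X t ω) (Set.Icc a b) := by
    intro ω
    rw [Set.indicator_apply]
    split_ifs with hω
    on_goal 1 => rw [Pi.one_apply]
    · have hcad : Cadlag (fun t => X t ω) := ⟨hX.cadlag_right ω, hX.cadlag_left ω⟩
      have hω' : JumpApprox (fun t => X t ω) 0 a b := by
        have : ((0:ℕ):ℝ) = 0 := by norm_num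
        rwa [this] at hω
      obtain ⟨t, ht1, ht2, ht3⟩ := jump_of_jumpApprox hcad (le_refl (0:ℝ)) hb hω'
      have htIoc : t ∈ Set.Ioc (0:ℝ) 1 := ⟨ht1, by linarith⟩
      rw [jumpCount]
      exact ENNReal.le_tsum ⟨t, htIoc, ht3⟩
    · exact zero_le
  calc P {ω | JumpApprox (fun t => X t ω) ((0:ℕ):ℝ) a b}
      = ∫⁻ ω, Set.indicator {ω | JumpApprox (fun t => X t ω) ((0:ℕ):ℝ) a b}
          (1 : Ω → ℝ≥0∞) ω ∂P := by
        rw [lintegral_indicator_one hmeas0]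
    _ ≤ ∫⁻ ω, jumpCount (fun t => X t ω) (Set.Icc a b) ∂P := lintegral_mono hle
    _ = π (Set.Icc a b) := by
        refine (hπ.2 (Set.Icc a b) measurableSet_Icc ⟨-b, by linarith, ?_⟩).symm
        intro y hy
        have h1 : y ≤ b := hy.2
        have h2 : |y| = -y := abs_of_neg (lt_of_le_of_lt h1 hb)
        rw [Set.mem_setOf_eq, h2]
        linarith

end ProbBounds

/-- locating a small negative value in the dyadic-type mesh -/
lemma find_interval {k : ℕ} {d : ℝ} (h1 : -(1/((k:ℝ)+1)) ≤ d) (h2 : d < 0) :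
    ∃ m : ℕ, k ≤ m ∧ -(1/((m:ℝ)+1)) ≤ d ∧ d ≤ -(1/((m:ℝ)+1+1)) := by
  set r := -d with hr
  have hr0 : 0 < r := by simp only [hr]; linarith
  have hrk : r ≤ 1/((k:ℝ)+1) := by simp only [hr]; linarith
  have hinv : ((k:ℝ)+1) ≤ 1/r := by
    rw [le_div_iff₀ hr0]
    calc ((k:ℝ)+1) * r ≤ ((k:ℝ)+1) * (1/((k:ℝ)+1)) :=
        mul_le_mul_of_nonneg_left hrk (by positivity)
    _ = 1 := by field_simp
  set N := Nat.floor (1/r) with hN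
  have hNk : k + 1 ≤ N := by
    apply Nat.le_floor
    push_cast
    exact hinv
  have hN1 : 1 ≤ N := by omega
  have hNpos : (0:ℝ) < N := by exact_mod_cast hN1
  have hfl : (N:ℝ) ≤ 1/r := Nat.floor_le (by positivity)
  have hfl2 : 1/r < (N:ℝ) + 1 := Nat.lt_floor_add_one _
  have hcast : ((N - 1 : ℕ):ℝ) + 1 = (N:ℝ) := by
    have h := Nat.cast_sub hN1 (R := ℝ)
    rw [h]
    push_cast
    ring
  refine ⟨N - 1, by omega, ?_, ?_⟩
  · rw [hcast]
    have hrN : r ≤ 1/(N:ℝ) := by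
      rw [le_div_iff₀ hNpos]
      calc r * N ≤ r * (1/r) := mul_le_mul_of_nonneg_left hfl hr0.le
      _ = 1 := by field_simp
    simp only [hr] at hrN
    linarith
  · rw [hcast]
    have hrN : 1/((N:ℝ)+1) < r := by
      rw [div_lt_iff₀ (by positivity)]
      have h3 : 1 < (N+1) * r := by
        have h4 := (div_lt_iff₀ hr0).1 hfl2
        linarith
      linarith
    simp only [hr] at hrN
    linarith

section MjNull

variable {Ω : Type*} [MeasurableSpace Ω] {P : Measure Ω} [IsProbabilityMeasure P]
  {X : ℝ → Ω → ℝ}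

lemma prob_Mj (hX : IsLevy P X) {π : Measure ℝ} (hπ : IsLevyMeasure P X π)
    (hfin : π (Set.Iio 0) < ∞) (j : ℕ) :
    P {ω | {t : ℝ | (j:ℝ) < t ∧ t ≤ (j:ℝ)+1 ∧
      X t ω - Function.leftLim (fun s => X s ω) t < 0}.Infinite} = 0 := by
  set a : ℕ → ℝ := fun m => -(1/((m:ℝ)+1)) with ha
  have hamono : Monotone a := by
    intro m1 m2 h
    simp only [ha, neg_le_neg_iff]
    apply one_div_le_one_div_of_le (by positivity)
    have : (m1:ℝ) ≤ m2 := by exact_mod_cast h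
    linarith
  have hastrict : ∀ m, a m < a (m+1) := by
    intro m
    simp only [ha, neg_lt_neg_iff]
    apply one_div_lt_one_div_of_lt (by positivity)
    push_cast
    linarith
  have haneg : ∀ m, a m < 0 := by
    intro m
    simp only [ha, neg_neg, Left.neg_neg_iff]
    positivity
  set Mev := {ω | {t : ℝ | (j:ℝ) < t ∧ t ≤ (j:ℝ)+1 ∧
      X t ω - Function.leftLim (fun s => X s ω) t < 0}.Infinite} with hMev
  -- inclusion into the union of small-jump events
  have hincl : ∀ k : ℕ, Mev ⊆ ⋃ m : ℕ,
      {ω | JumpApprox (fun t => X t ω) (j:ℝ) (a (k+m)) (a (k+m+1))} := by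
    intro k ω hω
    have hcad : Cadlag (fun t => X t ω) := ⟨hX.cadlag_right ω, hX.cadlag_left ω⟩
    have hbig : {t : ℝ | (j:ℝ) < t ∧ t ≤ (j:ℝ)+1 ∧
        X t ω - Function.leftLim (fun s => X s ω) t ≤ -(1/((k:ℝ)+1))}.Finite :=
      finite_big_jumps hcad (by positivity) (Nat.cast_nonneg j)
    have hωinf : Set.Infinite {t : ℝ | (j:ℝ) < t ∧ t ≤ (j:ℝ)+1 ∧
        X t ω - Function.leftLim (fun s => X s ω) t < 0} := hω
    have hne := (hωinf.diff hbig).nonempty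
    obtain ⟨t, htmem, htnot⟩ := hne
    obtain ⟨ht1, ht2, ht3⟩ := htmem
    have htd : -(1/((k:ℝ)+1)) ≤ X t ω - Function.leftLim (fun s => X s ω) t := by
      by_contra hc
      push_neg at hc
      exact htnot ⟨ht1, ht2, hc.le⟩
    obtain ⟨m, hkm, hm1, hm2⟩ := find_interval htd ht3
    refine Set.mem_iUnion.2 ⟨m - k, ?_⟩
    have hmk : k + (m - k) = m := by omega
    rw [Set.mem_setOf_eq, hmk]
    refine jumpApprox_of_jump hcad (Nat.cast_nonneg j) ht1 ht2 ⟨?_, ?_⟩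
    · simpa [ha] using hm1
    · have hcast : a (m+1) = -(1/((m:ℝ)+1+1)) := by
        simp only [ha]
        norm_cast
      rw [hcast]
      exact hm2
  -- measure bound
  set f : ℕ → ℝ≥0∞ := fun m => π (Set.Ico (a m) (a (m+1))) with hf
  have hIcc_le : ∀ m, π (Set.Icc (a m) (a (m+1))) ≤ f m + f (m+1) := by
    intro m
    have hsub : Set.Icc (a m) (a (m+1)) ⊆
        Set.Ico (a m) (a (m+1)) ∪ Set.Ico (a (m+1)) (a (m+2)) := by
      intro y hy
      rcases lt_or_eq_of_le hy.2 with h | h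
      · exact Or.inl ⟨hy.1, h⟩
      · refine Or.inr ⟨h.symm.le, ?_⟩
        rw [h]
        exact hastrict (m+1)
    calc π (Set.Icc (a m) (a (m+1))) ≤ π (Set.Ico (a m) (a (m+1)) ∪ Set.Ico (a (m+1)) (a (m+2))) :=
        measure_mono hsub
    _ ≤ f m + f (m+1) := measure_union_le _ _
  have hSk : ∀ k : ℕ, (∑' m : ℕ, f (k+m)) ≤ π (Set.Ico (a k) 0) := by
    intro k
    have hdisj : Pairwise (Function.onFun Disjoint (fun m : ℕ => Set.Ico (a (k+m)) (a (k+m+1)))) := by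
      intro m1 m2 hne
      rw [Function.onFun, Set.Ico_disjoint_Ico]
      rcases hne.lt_or_gt with h | h
      · exact le_trans (min_le_left _ _)
          (le_trans (hamono (show k+m1+1 ≤ k+m2 by omega)) (le_max_right _ _))
      · exact le_trans (min_le_right _ _)
          (le_trans (hamono (show k+m2+1 ≤ k+m1 by omega)) (le_max_left _ _))
    rw [show (∑' m : ℕ, f (k+m)) = π (⋃ m : ℕ, Set.Ico (a (k+m)) (a (k+m+1))) from
      (measure_iUnion hdisj (fun m => measurableSet_Ico)).symm]
    apply measure_mono
    apply Set.iUnion_subset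
    intro m y hy
    exact ⟨le_trans (hamono (by omega)) hy.1, lt_trans hy.2 (haneg _)⟩
  have hPk : ∀ k : ℕ, P Mev ≤ π (Set.Ico (a k) 0) + π (Set.Ico (a k) 0) := by
    intro k
    calc P Mev ≤ P (⋃ m : ℕ, {ω | JumpApprox (fun t => X t ω) (j:ℝ) (a (k+m)) (a (k+m+1))}) :=
        measure_mono (hincl k)
    _ ≤ ∑' m : ℕ, P {ω | JumpApprox (fun t => X t ω) (j:ℝ) (a (k+m)) (a (k+m+1))} :=
        measure_iUnion_le _
    _ ≤ ∑' m : ℕ, π (Set.Icc (a (k+m)) (a (k+m+1))) :=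
        ENNReal.tsum_le_tsum (fun m => prob_jumpApprox_le hX hπ (haneg _) j)
    _ ≤ ∑' m : ℕ, (f (k+m) + f (k+m+1)) := ENNReal.tsum_le_tsum (fun m => hIcc_le (k+m))
    _ = (∑' m : ℕ, f (k+m)) + ∑' m : ℕ, f (k+m+1) := ENNReal.tsum_add
    _ ≤ π (Set.Ico (a k) 0) + π (Set.Ico (a k) 0) := by
        apply add_le_add (hSk k)
        refine le_trans ?_ (hSk k)
        exact ENNReal.tsum_comp_le_tsum_of_injective
          (fun m1 m2 h => Nat.succ_injective h : Function.Injective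
          (fun m : ℕ => m + 1)) (fun m => f (k+m))
  have htend : Tendsto (fun k : ℕ => π (Set.Ico (a k) 0)) atTop (nhds 0) := by
    have hanti : Antitone (fun k : ℕ => Set.Ico (a k) 0) := by
      intro k1 k2 h y hy
      exact ⟨le_trans (hamono h) hy.1, hy.2⟩
    have hempty : ⋂ k : ℕ, Set.Ico (a k) 0 = ∅ := by
      ext y
      simp only [Set.mem_iInter, Set.mem_Ico, Set.mem_empty_iff_false, iff_false, not_forall]
      by_cases hy : y < 0
      · obtain ⟨n, hn⟩ := exists_nat_one_div_lt (show (0:ℝ) < -y by linarith)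
        refine ⟨n, ?_⟩
        rw [not_and_or]
        left
        simp only [ha, not_le]
        linarith
      · exact ⟨0, by rw [not_and_or]; right; exact hy⟩
    have h1 := tendsto_measure_iInter_atTop (μ := π)
      (fun k => measurableSet_Ico.nullMeasurableSet) hanti
      ⟨0, by
        apply ne_top_of_le_ne_top hfin.ne
        apply measure_mono
        intro y hy
        exact hy.2⟩
    rw [hempty] at h1
    simpa [Function.comp_def] using h1
  have hlim : Tendsto (fun k : ℕ => π (Set.Ico (a k) 0) + π (Set.Ico (a k) 0)) atTop (nhds 0) := by
    have h2 := htend.add htend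
    simpa using h2
  have hle0 : P Mev ≤ 0 :=
    le_of_tendsto_of_tendsto' tendsto_const_nhds hlim hPk
  exact le_antisymm hle0 (zero_le)

end MjNull




/-- Proposition 4.2 (a): if `X` does not creep downward and `0 < π((-∞,0)) < ∞`, then the
resurrected process has infinite lifetime: `P_x(ζ = ∞) = 1` for every `x > 0`. -/
theorem statement6 {Ω : Type*} [MeasurableSpace Ω] (P : Measure Ω) [IsProbabilityMeasure P]
    (X : ℝ → Ω → ℝ) (hX : IsLevy P X) (π : Measure ℝ) (hπ : IsLevyMeasure P X π)
    (hnocreep : ∀ x : ℝ, 0 < x →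
      P {ω | tauP (pathFrom X x ω) < ∞ ∧
        preVal (pathFrom X x ω) (tauP (pathFrom X x ω)) = 0} = 0)
    (hpos : 0 < π (Set.Iio 0)) (hfin : π (Set.Iio 0) < ∞) :
    ∀ x : ℝ, 0 < x → P {ω | zetaP (pathFrom X x ω) = ∞} = 1 := by
  intro x hx
  classical
  set Msets : ℕ → Set Ω := fun j => {ω | {t : ℝ | (j:ℝ) < t ∧ t ≤ (j:ℝ)+1 ∧
      X t ω - Function.leftLim (fun s => X s ω) t < 0}.Infinite} with hMdef
  set Nsets : {q : ℚ // (q:ℝ) ≤ 0} → Set Ω := fun q =>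
    {ω | tauP (pathFrom X (x - (q:ℚ)) ω) < ∞ ∧
      preVal (pathFrom X (x - (q:ℚ)) ω) (tauP (pathFrom X (x - (q:ℚ)) ω)) = 0} with hNdef
  set bad : Set Ω := (⋃ j : ℕ, Msets j) ∪ (⋃ q, Nsets q) with hbaddef
  have hbad0 : P bad = 0 := by
    have h1 : P (⋃ j : ℕ, Msets j) = 0 := by
      apply le_antisymm _ (zero_le)
      calc P (⋃ j, Msets j) ≤ ∑' j : ℕ, P (Msets j) := measure_iUnion_le _
      _ = 0 := by
          convert tsum_zero with j
          exact prob_Mj hX hπ hfin j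
    have h2 : P (⋃ q, Nsets q) = 0 := by
      apply le_antisymm _ (zero_le)
      calc P (⋃ q, Nsets q) ≤ ∑' q : {q : ℚ // (q:ℝ) ≤ 0}, P (Nsets q) := measure_iUnion_le _
      _ = 0 := by
          convert tsum_zero with q
          exact hnocreep (x - (q:ℚ)) (by have := q.2; linarith)
    apply le_antisymm _ (zero_le)
    calc P bad ≤ P (⋃ j : ℕ, Msets j) + P (⋃ q, Nsets q) := measure_union_le _ _
    _ = 0 := by rw [h1, h2, add_zero]
  have hsub : ∀ ω, ω ∉ bad → zetaP (pathFrom X x ω) = ∞ := by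
    intro ω hω
    have hωM : ∀ j : ℕ, ω ∉ Msets j := fun j hj =>
      hω (Set.mem_union_left _ (Set.mem_iUnion.2 ⟨j, hj⟩))
    have hωN : ∀ q : {q : ℚ // (q:ℝ) ≤ 0}, ω ∉ Nsets q := fun q hq =>
      hω (Set.mem_union_right _ (Set.mem_iUnion.2 ⟨q, hq⟩))
    have hcadX : Cadlag (fun t => X t ω) := ⟨hX.cadlag_right ω, hX.cadlag_left ω⟩
    have hcadf : Cadlag (pathFrom X x ω) := cadlag_const_add hcadX x
    have hf0 : 0 < pathFrom X x ω 0 := by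
      show 0 < x + X 0 ω
      rw [hX.init ω]
      linarith
    apply main_det hcadf hf0
    · intro T
      have hjid : ∀ t : ℝ, 0 < t → pathFrom X x ω t - Function.leftLim (pathFrom X x ω) t
          = X t ω - Function.leftLim (fun s => X s ω) t := by
        intro t ht
        have hll := leftLim_const_add ht hcadX x
        show x + X t ω - Function.leftLim (fun s => x + X s ω) t = _
        rw [hll]
        ring
      have hsubset : {t : ℝ | 0 < t ∧ t ≤ T ∧
          pathFrom X x ω t - Function.leftLim (pathFrom X x ω) t < 0}
          ⊆ ⋃ j ∈ Finset.range (Nat.ceil T), {t : ℝ | (j:ℝ) < t ∧ t ≤ (j:ℝ)+1 ∧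
            X t ω - Function.leftLim (fun s => X s ω) t < 0} := by
        intro t ht
        obtain ⟨ht0, htT, htj⟩ := ht
        have hceil1 : 1 ≤ Nat.ceil t := Nat.one_le_ceil_iff.2 ht0
        refine Set.mem_biUnion (x := Nat.ceil t - 1) ?_ ?_
        · show (Nat.ceil t - 1 : ℕ) ∈ (Finset.range (Nat.ceil T) : Set ℕ)
          rw [Finset.coe_range, Set.mem_Iio]
          have hmono : Nat.ceil t ≤ Nat.ceil T := Nat.ceil_le_ceil htT
          omega
        · have hc1 : ((Nat.ceil t - 1 : ℕ):ℝ) = ((Nat.ceil t : ℕ):ℝ) - 1 := by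
            rw [Nat.cast_sub hceil1]
            norm_num
          refine ⟨?_, ?_, ?_⟩
          · rw [hc1]
            have := Nat.ceil_lt_add_one (le_of_lt ht0)
            linarith
          · rw [hc1]
            have := Nat.le_ceil t
            linarith
          · rw [← hjid t ht0]
            exact htj
      apply Set.Finite.subset _ hsubset
      apply Set.Finite.biUnion (Finset.range (Nat.ceil T)).finite_toSet
      intro j _
      exact Set.not_infinite.1 (hωM j)
    · intro q hq hcontra
      apply hωN ⟨q, hq⟩
      have hfq : pathFrom X (x - (q:ℚ)) ω = fun t => pathFrom X x ω t - (q:ℚ) := by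
        funext t
        show x - (q:ℚ) + X t ω = x + X t ω - (q:ℚ)
        ring
      show tauP (pathFrom X (x - (q:ℚ)) ω) < ∞ ∧
        preVal (pathFrom X (x - (q:ℚ)) ω) (tauP (pathFrom X (x - (q:ℚ)) ω)) = 0
      rw [hfq]
      exact hcontra
  obtain ⟨B, hBsub, hBmeas, hB0⟩ := exists_measurable_superset_of_null hbad0
  have hBc : Bᶜ ⊆ {ω | zetaP (pathFrom X x ω) = ∞} := by
    intro ω hω
    exact hsub ω (fun hbad' => hω (hBsub hbad'))
  have hPBc : P Bᶜ = 1 := by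
    rw [measure_compl hBmeas (measure_ne_top P B), hB0, measure_univ]
    simp
  apply le_antisymm prob_le_one
  calc (1:ℝ≥0∞) = P Bᶜ := hPBc.symm
  _ ≤ P {ω | zetaP (pathFrom X x ω) = ∞} := measure_mono hBc
end
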